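/- arXiv:2501.06373 — 3 statements merged into one kernel-verified Lean document; each statement's English description precedes it below -/
import Mathlib

section
/- Let (u, φ, ψ, w) be a classical solution of the suspension-bridge Shear beam system in thermoelasticity of type III, let c_p > 0 be a Poincaré constant for (0,L), and define I₁(t) = ∫₀^L ( ρ u_t u + (μ/2) u² ) dx + ∫₀^L ( ρ₁ φ_t φ + (γ/2) φ² ) dx and I₂(t) = ρ₃ ∫₀^L w_t w dx + (κ/2) ∫₀^L w_x² dx + β ∫₀^L φ_x w dx. Then there exists a constant ξ > 0, depending only on the constitutive constants, L, c_p and not on the solution, such that |I₁(t) + I₂(t)| ≤ ξ E(t) for all t ≥ 0. Consequently, for every N > ξ the Lyapunov functional L(t) = N E(t) + I₁(t) + I₂(t) satisfies (N−ξ) E(t) ≤ L(t) ≤ (N+ξ) E(t) for all t ≥ 0. -/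
open MeasureTheory Set

noncomputable section

/-- Partial derivative with respect to the time variable (second argument). -/
def pdt (f : ℝ → ℝ → ℝ) (x t : ℝ) : ℝ := deriv (fun s => f x s) t

/-- Partial derivative with respect to the space variable (first argument). -/
def pdx (f : ℝ → ℝ → ℝ) (x t : ℝ) : ℝ := deriv (fun y => f y t) x

/-- A classical solution of the suspension-bridge Shear beam system in
thermoelasticity of type III. -/
structure IsShearSolution (L ρ α lm μ ρ₁ K γ b ρ₃ δ κ β : ℝ)
    (u φ ψ w : ℝ → ℝ → ℝ) : Prop where
  smooth_u : ContDiff ℝ 3 (fun p : ℝ × ℝ => u p.1 p.2)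
  smooth_phi : ContDiff ℝ 3 (fun p : ℝ × ℝ => φ p.1 p.2)
  smooth_psi : ContDiff ℝ 3 (fun p : ℝ × ℝ => ψ p.1 p.2)
  smooth_w : ContDiff ℝ 3 (fun p : ℝ × ℝ => w p.1 p.2)
  eq1 : ∀ x ∈ Ioo (0:ℝ) L, ∀ t : ℝ, 0 < t →
    ρ * pdt (pdt u) x t - α * pdx (pdx u) x t - lm * (φ x t - u x t)
      + μ * pdt u x t = 0
  eq2 : ∀ x ∈ Ioo (0:ℝ) L, ∀ t : ℝ, 0 < t →
    ρ₁ * pdt (pdt φ) x t - K * pdx (fun y s => pdx φ y s + ψ y s) x t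
      + lm * (φ x t - u x t) + γ * pdt φ x t + β * pdx (pdt w) x t = 0
  eq3 : ∀ x ∈ Ioo (0:ℝ) L, ∀ t : ℝ, 0 < t →
    -b * pdx (pdx ψ) x t + K * (pdx φ x t + ψ x t) = 0
  eq4 : ∀ x ∈ Ioo (0:ℝ) L, ∀ t : ℝ, 0 < t →
    ρ₃ * pdt (pdt w) x t - δ * pdx (pdx w) x t + β * pdx (pdt φ) x t
      - κ * pdx (pdx (pdt w)) x t = 0
  bc : ∀ t : ℝ, 0 ≤ t →
    u 0 t = 0 ∧ u L t = 0 ∧ φ 0 t = 0 ∧ φ L t = 0 ∧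
    ψ 0 t = 0 ∧ ψ L t = 0 ∧ w 0 t = 0 ∧ w L t = 0

/-- The energy functional of the system. -/
def energy (L ρ α lm ρ₁ K b ρ₃ δ : ℝ) (u φ ψ w : ℝ → ℝ → ℝ) (t : ℝ) : ℝ :=
  (1/2) * ∫ x in (0:ℝ)..L,
    (ρ * (pdt u x t)^2 + α * (pdx u x t)^2 + lm * (φ x t - u x t)^2
      + ρ₁ * (pdt φ x t)^2 + K * (pdx φ x t + ψ x t)^2 + b * (pdx ψ x t)^2
      + ρ₃ * (pdt w x t)^2 + δ * (pdx w x t)^2)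

/-- The auxiliary functional I₁. -/
def I1 (L ρ μ ρ₁ γ : ℝ) (u φ : ℝ → ℝ → ℝ) (t : ℝ) : ℝ :=
  (∫ x in (0:ℝ)..L, (ρ * pdt u x t * u x t + μ / 2 * (u x t)^2))
    + ∫ x in (0:ℝ)..L, (ρ₁ * pdt φ x t * φ x t + γ / 2 * (φ x t)^2)

/-- The auxiliary functional I₂. -/
def I2 (L ρ₃ κ β : ℝ) (φ w : ℝ → ℝ → ℝ) (t : ℝ) : ℝ :=
  ρ₃ * (∫ x in (0:ℝ)..L, pdt w x t * w x t)
    + κ / 2 * (∫ x in (0:ℝ)..L, (pdx w x t)^2)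
    + β * ∫ x in (0:ℝ)..L, pdx φ x t * w x t

lemma contDiff_slice {f : ℝ → ℝ → ℝ} (hf : ContDiff ℝ 3 (fun p : ℝ × ℝ => f p.1 p.2)) (t : ℝ) :
    ContDiff ℝ 1 (fun x => f x t) :=
  (hf.of_le (by norm_num)).comp (contDiff_id.prodMk contDiff_const)

lemma pdt_eq_fderiv {f : ℝ → ℝ → ℝ} (hf : ContDiff ℝ 3 (fun p : ℝ × ℝ => f p.1 p.2)) (x t : ℝ) :
    pdt f x t = fderiv ℝ (fun p : ℝ × ℝ => f p.1 p.2) (x, t) (0, 1) := by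
  have hd : HasFDerivAt (fun p : ℝ × ℝ => f p.1 p.2)
      (fderiv ℝ (fun p : ℝ × ℝ => f p.1 p.2) (x, t)) (x, t) :=
    ((hf.differentiable (by norm_num)) (x, t)).hasFDerivAt
  have hline : HasDerivAt (fun s : ℝ => ((x : ℝ), s)) ((0 : ℝ), (1 : ℝ)) t :=
    (hasDerivAt_const t x).prodMk (hasDerivAt_id t)
  exact (hd.comp_hasDerivAt t hline).deriv

lemma pdx_eq_fderiv {f : ℝ → ℝ → ℝ} (hf : ContDiff ℝ 3 (fun p : ℝ × ℝ => f p.1 p.2)) (x t : ℝ) :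
    pdx f x t = fderiv ℝ (fun p : ℝ × ℝ => f p.1 p.2) (x, t) (1, 0) := by
  have hd : HasFDerivAt (fun p : ℝ × ℝ => f p.1 p.2)
      (fderiv ℝ (fun p : ℝ × ℝ => f p.1 p.2) (x, t)) (x, t) :=
    ((hf.differentiable (by norm_num)) (x, t)).hasFDerivAt
  have hline : HasDerivAt (fun y : ℝ => (y, (t : ℝ))) ((1 : ℝ), (0 : ℝ)) x :=
    (hasDerivAt_id x).prodMk (hasDerivAt_const x t)
  exact (hd.comp_hasDerivAt x hline).deriv

lemma cont_pdt {f : ℝ → ℝ → ℝ} (hf : ContDiff ℝ 3 (fun p : ℝ × ℝ => f p.1 p.2)) (t : ℝ) :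
    Continuous fun x => pdt f x t := by
  have h : (fun x => pdt f x t)
      = fun x => fderiv ℝ (fun p : ℝ × ℝ => f p.1 p.2) (x, t) (0, 1) :=
    funext fun x => pdt_eq_fderiv hf x t
  rw [h]
  exact ((hf.continuous_fderiv (by norm_num)).comp
    (continuous_id.prodMk continuous_const)).clm_apply continuous_const

lemma cont_pdx {f : ℝ → ℝ → ℝ} (hf : ContDiff ℝ 3 (fun p : ℝ × ℝ => f p.1 p.2)) (t : ℝ) :
    Continuous fun x => pdx f x t := by
  have h : (fun x => pdx f x t)
      = fun x => fderiv ℝ (fun p : ℝ × ℝ => f p.1 p.2) (x, t) (1, 0) :=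
    funext fun x => pdx_eq_fderiv hf x t
  rw [h]
  exact ((hf.continuous_fderiv (by norm_num)).comp
    (continuous_id.prodMk continuous_const)).clm_apply continuous_const

lemma cont_slice {f : ℝ → ℝ → ℝ} (hf : ContDiff ℝ 3 (fun p : ℝ × ℝ => f p.1 p.2)) (t : ℝ) :
    Continuous fun x => f x t :=
  hf.continuous.comp (continuous_id.prodMk continuous_const)


lemma young_int {L : ℝ} (hL : 0 < L) {f g : ℝ → ℝ} (hf : Continuous f) (hg : Continuous g) :
    |∫ x in (0:ℝ)..L, f x * g x|
      ≤ 1/2 * (∫ x in (0:ℝ)..L, (f x)^2) + 1/2 * ∫ x in (0:ℝ)..L, (g x)^2 := by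
  have h1 : |∫ x in (0:ℝ)..L, f x * g x| ≤ ∫ x in (0:ℝ)..L, |f x * g x| :=
    intervalIntegral.abs_integral_le_integral_abs hL.le
  have h2 : (∫ x in (0:ℝ)..L, |f x * g x|)
      ≤ ∫ x in (0:ℝ)..L, (1/2 * (f x)^2 + 1/2 * (g x)^2) := by
    refine intervalIntegral.integral_mono_on hL.le
      ((hf.mul hg).abs.intervalIntegrable 0 L)
      (((continuous_const.mul (hf.pow 2)).add
        (continuous_const.mul (hg.pow 2))).intervalIntegrable 0 L) fun x _ => ?_
    rw [abs_le]
    constructor <;> nlinarith [sq_nonneg (f x + g x), sq_nonneg (f x - g x)]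
  have h3 : (∫ x in (0:ℝ)..L, (1/2 * (f x)^2 + 1/2 * (g x)^2))
      = 1/2 * (∫ x in (0:ℝ)..L, (f x)^2) + 1/2 * ∫ x in (0:ℝ)..L, (g x)^2 := by
    rw [intervalIntegral.integral_add
        ((continuous_const.fun_mul (hf.fun_pow 2)).intervalIntegrable 0 L)
        ((continuous_const.fun_mul (hg.fun_pow 2)).intervalIntegrable 0 L),
      intervalIntegral.integral_const_mul, intervalIntegral.integral_const_mul]
  linarith

lemma split2_int {L c d : ℝ} {f g : ℝ → ℝ} (hf : Continuous f) (hg : Continuous g) :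
    (∫ x in (0:ℝ)..L, (c * (f x * g x) + d * (g x)^2))
      = c * (∫ x in (0:ℝ)..L, f x * g x) + d * ∫ x in (0:ℝ)..L, (g x)^2 := by
  rw [intervalIntegral.integral_add
      ((continuous_const.fun_mul (hf.fun_mul hg)).intervalIntegrable 0 L)
      ((continuous_const.fun_mul (hg.fun_pow 2)).intervalIntegrable 0 L),
    intervalIntegral.integral_const_mul, intervalIntegral.integral_const_mul]

set_option maxHeartbeats 1000000 in
lemma key_bound {L ρ α lm μ ρ₁ K γ b ρ₃ δ κ β c_p ξ : ℝ}
    (hL : 0 < L) (hρ : 0 < ρ) (hlm : 0 < lm) (hμ : 0 < μ) (hρ₁ : 0 < ρ₁)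
    (hγ : 0 < γ) (hρ₃ : 0 < ρ₃) (hκ : 0 < κ) (hcp : 0 < c_p) (hξ0 : 0 ≤ ξ)
    (U Φ Ψ W Ut Φt Wt Ux Φx Ψx Wx : ℝ → ℝ)
    (cU : Continuous U) (cΦ : Continuous Φ) (cΨ : Continuous Ψ) (cW : Continuous W)
    (cUt : Continuous Ut) (cΦt : Continuous Φt) (cWt : Continuous Wt)
    (cUx : Continuous Ux) (cΦx : Continuous Φx) (cΨx : Continuous Ψx) (cWx : Continuous Wx)
    (hPu : (∫ x in (0:ℝ)..L, (U x)^2) ≤ c_p * ∫ x in (0:ℝ)..L, (Ux x)^2)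
    (hPφ : (∫ x in (0:ℝ)..L, (Φ x)^2) ≤ c_p * ∫ x in (0:ℝ)..L, (Φx x)^2)
    (hPψ : (∫ x in (0:ℝ)..L, (Ψ x)^2) ≤ c_p * ∫ x in (0:ℝ)..L, (Ψx x)^2)
    (hPw : (∫ x in (0:ℝ)..L, (W x)^2) ≤ c_p * ∫ x in (0:ℝ)..L, (Wx x)^2)
    (hx1 : ρ/2 ≤ ξ*ρ/2) (hx2 : (ρ+μ)*c_p/2 ≤ ξ*α/2)
    (hx4 : ρ₁/2 ≤ ξ*ρ₁/2) (hx5 : (ρ₁+γ)*c_p + |β| ≤ ξ*K/2)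
    (hx6 : (ρ₁+γ)*c_p^2 + |β| * c_p ≤ ξ*b/2) (hx7 : ρ₃/2 ≤ ξ*ρ₃/2)
    (hx8 : κ/2 + (ρ₃+|β|)*c_p/2 ≤ ξ*δ/2) :
    |((∫ x in (0:ℝ)..L, (ρ * Ut x * U x + μ/2 * (U x)^2))
        + ∫ x in (0:ℝ)..L, (ρ₁ * Φt x * Φ x + γ/2 * (Φ x)^2))
      + (ρ₃ * (∫ x in (0:ℝ)..L, Wt x * W x)
        + κ/2 * (∫ x in (0:ℝ)..L, (Wx x)^2)
        + β * ∫ x in (0:ℝ)..L, Φx x * W x)|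
      ≤ ξ * ((1/2) * ∫ x in (0:ℝ)..L,
          (ρ * (Ut x)^2 + α * (Ux x)^2 + lm * (Φ x - U x)^2 + ρ₁ * (Φt x)^2
            + K * (Φx x + Ψ x)^2 + b * (Ψx x)^2 + ρ₃ * (Wt x)^2 + δ * (Wx x)^2)) := by
  -- nonnegativity
  have hA1 : (0:ℝ) ≤ ∫ x in (0:ℝ)..L, (Ut x)^2 :=
    intervalIntegral.integral_nonneg hL.le fun x _ => sq_nonneg _
  have hA2 : (0:ℝ) ≤ ∫ x in (0:ℝ)..L, (Ux x)^2 :=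
    intervalIntegral.integral_nonneg hL.le fun x _ => sq_nonneg _
  have hA3 : (0:ℝ) ≤ ∫ x in (0:ℝ)..L, (Φ x - U x)^2 :=
    intervalIntegral.integral_nonneg hL.le fun x _ => sq_nonneg _
  have hA4 : (0:ℝ) ≤ ∫ x in (0:ℝ)..L, (Φt x)^2 :=
    intervalIntegral.integral_nonneg hL.le fun x _ => sq_nonneg _
  have hA5 : (0:ℝ) ≤ ∫ x in (0:ℝ)..L, (Φx x + Ψ x)^2 :=
    intervalIntegral.integral_nonneg hL.le fun x _ => sq_nonneg _
  have hA6 : (0:ℝ) ≤ ∫ x in (0:ℝ)..L, (Ψx x)^2 :=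
    intervalIntegral.integral_nonneg hL.le fun x _ => sq_nonneg _
  have hA7 : (0:ℝ) ≤ ∫ x in (0:ℝ)..L, (Wt x)^2 :=
    intervalIntegral.integral_nonneg hL.le fun x _ => sq_nonneg _
  have hA8 : (0:ℝ) ≤ ∫ x in (0:ℝ)..L, (Wx x)^2 :=
    intervalIntegral.integral_nonneg hL.le fun x _ => sq_nonneg _
  have hB1 : (0:ℝ) ≤ ∫ x in (0:ℝ)..L, (U x)^2 :=
    intervalIntegral.integral_nonneg hL.le fun x _ => sq_nonneg _
  have hB2 : (0:ℝ) ≤ ∫ x in (0:ℝ)..L, (Φ x)^2 :=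
    intervalIntegral.integral_nonneg hL.le fun x _ => sq_nonneg _
  -- splitting of I1 pieces
  have hsp1 : (∫ x in (0:ℝ)..L, (ρ * Ut x * U x + μ/2 * (U x)^2))
      = ρ * (∫ x in (0:ℝ)..L, Ut x * U x) + μ/2 * ∫ x in (0:ℝ)..L, (U x)^2 := by
    rw [show (fun x => ρ * Ut x * U x + μ/2 * (U x)^2)
        = fun x => ρ * (Ut x * U x) + μ/2 * (U x)^2 from funext fun x => by ring]
    exact split2_int cUt cU
  have hsp2 : (∫ x in (0:ℝ)..L, (ρ₁ * Φt x * Φ x + γ/2 * (Φ x)^2))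
      = ρ₁ * (∫ x in (0:ℝ)..L, Φt x * Φ x) + γ/2 * ∫ x in (0:ℝ)..L, (Φ x)^2 := by
    rw [show (fun x => ρ₁ * Φt x * Φ x + γ/2 * (Φ x)^2)
        = fun x => ρ₁ * (Φt x * Φ x) + γ/2 * (Φ x)^2 from funext fun x => by ring]
    exact split2_int cΦt cΦ
  -- Young bounds
  have hy1 : ρ * |∫ x in (0:ℝ)..L, Ut x * U x|
      ≤ ρ * (1/2 * (∫ x in (0:ℝ)..L, (Ut x)^2) + 1/2 * ∫ x in (0:ℝ)..L, (U x)^2) :=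
    mul_le_mul_of_nonneg_left (young_int hL cUt cU) hρ.le
  have hy2 : ρ₁ * |∫ x in (0:ℝ)..L, Φt x * Φ x|
      ≤ ρ₁ * (1/2 * (∫ x in (0:ℝ)..L, (Φt x)^2) + 1/2 * ∫ x in (0:ℝ)..L, (Φ x)^2) :=
    mul_le_mul_of_nonneg_left (young_int hL cΦt cΦ) hρ₁.le
  have hy3 : ρ₃ * |∫ x in (0:ℝ)..L, Wt x * W x|
      ≤ ρ₃ * (1/2 * (∫ x in (0:ℝ)..L, (Wt x)^2) + 1/2 * ∫ x in (0:ℝ)..L, (W x)^2) :=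
    mul_le_mul_of_nonneg_left (young_int hL cWt cW) hρ₃.le
  have hy5 : |β| * |∫ x in (0:ℝ)..L, Φx x * W x|
      ≤ |β| * (1/2 * (∫ x in (0:ℝ)..L, (Φx x)^2) + 1/2 * ∫ x in (0:ℝ)..L, (W x)^2) :=
    mul_le_mul_of_nonneg_left (young_int hL cΦx cW) (abs_nonneg β)
  -- Φx² bound
  have hB5 : (∫ x in (0:ℝ)..L, (Φx x)^2)
      ≤ 2 * (∫ x in (0:ℝ)..L, (Φx x + Ψ x)^2) + 2 * ∫ x in (0:ℝ)..L, (Ψ x)^2 := by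
    have h1 : (∫ x in (0:ℝ)..L, (Φx x)^2)
        ≤ ∫ x in (0:ℝ)..L, (2 * (Φx x + Ψ x)^2 + 2 * (Ψ x)^2) := by
      refine intervalIntegral.integral_mono_on hL.le
        ((cΦx.pow 2).intervalIntegrable 0 L)
        (((continuous_const.mul ((cΦx.add cΨ).pow 2)).add
          (continuous_const.mul (cΨ.pow 2))).intervalIntegrable 0 L) fun x _ => ?_
      nlinarith [sq_nonneg (Φx x + 2 * Ψ x)]
    rwa [intervalIntegral.integral_add
        ((continuous_const.fun_mul ((cΦx.fun_add cΨ).fun_pow 2)).intervalIntegrable 0 L)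
        ((continuous_const.fun_mul (cΨ.fun_pow 2)).intervalIntegrable 0 L),
      intervalIntegral.integral_const_mul, intervalIntegral.integral_const_mul] at h1
  -- energy splitting
  have k1 : Continuous fun x => ρ * (Ut x)^2 := continuous_const.mul (cUt.pow 2)
  have k2 : Continuous fun x => α * (Ux x)^2 := continuous_const.mul (cUx.pow 2)
  have k3 : Continuous fun x => lm * (Φ x - U x)^2 := continuous_const.mul ((cΦ.sub cU).pow 2)
  have k4 : Continuous fun x => ρ₁ * (Φt x)^2 := continuous_const.mul (cΦt.pow 2)
  have k5 : Continuous fun x => K * (Φx x + Ψ x)^2 := continuous_const.mul ((cΦx.add cΨ).pow 2)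
  have k6 : Continuous fun x => b * (Ψx x)^2 := continuous_const.mul (cΨx.pow 2)
  have k7 : Continuous fun x => ρ₃ * (Wt x)^2 := continuous_const.mul (cWt.pow 2)
  have k8 : Continuous fun x => δ * (Wx x)^2 := continuous_const.mul (cWx.pow 2)
  have hE : (∫ x in (0:ℝ)..L,
        (ρ * (Ut x)^2 + α * (Ux x)^2 + lm * (Φ x - U x)^2 + ρ₁ * (Φt x)^2
          + K * (Φx x + Ψ x)^2 + b * (Ψx x)^2 + ρ₃ * (Wt x)^2 + δ * (Wx x)^2))
      = ρ * (∫ x in (0:ℝ)..L, (Ut x)^2) + α * (∫ x in (0:ℝ)..L, (Ux x)^2)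
        + lm * (∫ x in (0:ℝ)..L, (Φ x - U x)^2) + ρ₁ * (∫ x in (0:ℝ)..L, (Φt x)^2)
        + K * (∫ x in (0:ℝ)..L, (Φx x + Ψ x)^2) + b * (∫ x in (0:ℝ)..L, (Ψx x)^2)
        + ρ₃ * (∫ x in (0:ℝ)..L, (Wt x)^2) + δ * ∫ x in (0:ℝ)..L, (Wx x)^2 := by
    rw [intervalIntegral.integral_add
          (((((((k1.fun_add k2).fun_add k3).fun_add k4).fun_add k5).fun_add k6).fun_add k7).intervalIntegrable 0 L)
          (k8.intervalIntegrable 0 L),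
      intervalIntegral.integral_add
          ((((((k1.fun_add k2).fun_add k3).fun_add k4).fun_add k5).fun_add k6).intervalIntegrable 0 L)
          (k7.intervalIntegrable 0 L),
      intervalIntegral.integral_add
          (((((k1.fun_add k2).fun_add k3).fun_add k4).fun_add k5).intervalIntegrable 0 L)
          (k6.intervalIntegrable 0 L),
      intervalIntegral.integral_add
          ((((k1.fun_add k2).fun_add k3).fun_add k4).intervalIntegrable 0 L)
          (k5.intervalIntegrable 0 L),
      intervalIntegral.integral_add
          (((k1.fun_add k2).fun_add k3).intervalIntegrable 0 L) (k4.intervalIntegrable 0 L),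
      intervalIntegral.integral_add
          ((k1.fun_add k2).intervalIntegrable 0 L) (k3.intervalIntegrable 0 L),
      intervalIntegral.integral_add
          (k1.intervalIntegrable 0 L) (k2.intervalIntegrable 0 L),
      intervalIntegral.integral_const_mul, intervalIntegral.integral_const_mul,
      intervalIntegral.integral_const_mul, intervalIntegral.integral_const_mul,
      intervalIntegral.integral_const_mul, intervalIntegral.integral_const_mul,
      intervalIntegral.integral_const_mul, intervalIntegral.integral_const_mul]
  -- abs chain
  have habs : |((∫ x in (0:ℝ)..L, (ρ * Ut x * U x + μ/2 * (U x)^2))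
        + ∫ x in (0:ℝ)..L, (ρ₁ * Φt x * Φ x + γ/2 * (Φ x)^2))
      + (ρ₃ * (∫ x in (0:ℝ)..L, Wt x * W x)
        + κ/2 * (∫ x in (0:ℝ)..L, (Wx x)^2)
        + β * ∫ x in (0:ℝ)..L, Φx x * W x)|
      ≤ |∫ x in (0:ℝ)..L, (ρ * Ut x * U x + μ/2 * (U x)^2)|
        + |∫ x in (0:ℝ)..L, (ρ₁ * Φt x * Φ x + γ/2 * (Φ x)^2)|
        + (ρ₃ * |∫ x in (0:ℝ)..L, Wt x * W x|
          + κ/2 * (∫ x in (0:ℝ)..L, (Wx x)^2)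
          + |β| * |∫ x in (0:ℝ)..L, Φx x * W x|) := by
    have h1 := abs_add_le ((∫ x in (0:ℝ)..L, (ρ * Ut x * U x + μ/2 * (U x)^2))
        + ∫ x in (0:ℝ)..L, (ρ₁ * Φt x * Φ x + γ/2 * (Φ x)^2))
      (ρ₃ * (∫ x in (0:ℝ)..L, Wt x * W x) + κ/2 * (∫ x in (0:ℝ)..L, (Wx x)^2)
        + β * ∫ x in (0:ℝ)..L, Φx x * W x)
    have h2 := abs_add_le (∫ x in (0:ℝ)..L, (ρ * Ut x * U x + μ/2 * (U x)^2))
      (∫ x in (0:ℝ)..L, (ρ₁ * Φt x * Φ x + γ/2 * (Φ x)^2))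
    have h3 := abs_add_le (ρ₃ * (∫ x in (0:ℝ)..L, Wt x * W x)
        + κ/2 * (∫ x in (0:ℝ)..L, (Wx x)^2)) (β * ∫ x in (0:ℝ)..L, Φx x * W x)
    have h4 := abs_add_le (ρ₃ * ∫ x in (0:ℝ)..L, Wt x * W x)
      (κ/2 * ∫ x in (0:ℝ)..L, (Wx x)^2)
    have h5 : |ρ₃ * ∫ x in (0:ℝ)..L, Wt x * W x|
        = ρ₃ * |∫ x in (0:ℝ)..L, Wt x * W x| := by rw [abs_mul, abs_of_pos hρ₃]
    have h6 : |β * ∫ x in (0:ℝ)..L, Φx x * W x|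
        = |β| * |∫ x in (0:ℝ)..L, Φx x * W x| := abs_mul _ _
    have h7 : |κ/2 * ∫ x in (0:ℝ)..L, (Wx x)^2|
        = κ/2 * ∫ x in (0:ℝ)..L, (Wx x)^2 := abs_of_nonneg (by positivity)
    linarith
  -- bounds on the first two absolute values
  have hT1 : |∫ x in (0:ℝ)..L, (ρ * Ut x * U x + μ/2 * (U x)^2)|
      ≤ ρ * (1/2 * (∫ x in (0:ℝ)..L, (Ut x)^2) + 1/2 * ∫ x in (0:ℝ)..L, (U x)^2)
        + μ/2 * ∫ x in (0:ℝ)..L, (U x)^2 := by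
    rw [hsp1]
    have := abs_add_le (ρ * ∫ x in (0:ℝ)..L, Ut x * U x)
      (μ/2 * ∫ x in (0:ℝ)..L, (U x)^2)
    have h5 : |ρ * ∫ x in (0:ℝ)..L, Ut x * U x|
        = ρ * |∫ x in (0:ℝ)..L, Ut x * U x| := by rw [abs_mul, abs_of_pos hρ]
    have h7 : |μ/2 * ∫ x in (0:ℝ)..L, (U x)^2|
        = μ/2 * ∫ x in (0:ℝ)..L, (U x)^2 := abs_of_nonneg (by positivity)
    linarith
  have hT2 : |∫ x in (0:ℝ)..L, (ρ₁ * Φt x * Φ x + γ/2 * (Φ x)^2)|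
      ≤ ρ₁ * (1/2 * (∫ x in (0:ℝ)..L, (Φt x)^2) + 1/2 * ∫ x in (0:ℝ)..L, (Φ x)^2)
        + γ/2 * ∫ x in (0:ℝ)..L, (Φ x)^2 := by
    rw [hsp2]
    have := abs_add_le (ρ₁ * ∫ x in (0:ℝ)..L, Φt x * Φ x)
      (γ/2 * ∫ x in (0:ℝ)..L, (Φ x)^2)
    have h5 : |ρ₁ * ∫ x in (0:ℝ)..L, Φt x * Φ x|
        = ρ₁ * |∫ x in (0:ℝ)..L, Φt x * Φ x| := by rw [abs_mul, abs_of_pos hρ₁]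
    have h7 : |γ/2 * ∫ x in (0:ℝ)..L, (Φ x)^2|
        = γ/2 * ∫ x in (0:ℝ)..L, (Φ x)^2 := abs_of_nonneg (by positivity)
    linarith
  -- Poincaré-type nonlinear pluggings
  have e1 : (ρ+μ)/2 * (∫ x in (0:ℝ)..L, (U x)^2)
      ≤ (ρ+μ)/2 * (c_p * ∫ x in (0:ℝ)..L, (Ux x)^2) :=
    mul_le_mul_of_nonneg_left hPu (by positivity)
  have e5 : (∫ x in (0:ℝ)..L, (Φx x)^2)
      ≤ 2 * (∫ x in (0:ℝ)..L, (Φx x + Ψ x)^2) + 2 * (c_p * ∫ x in (0:ℝ)..L, (Ψx x)^2) := by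
    nlinarith [hB5, hPψ]
  have e2 : (ρ₁+γ)/2 * (∫ x in (0:ℝ)..L, (Φ x)^2)
      ≤ (ρ₁+γ)/2 * (c_p * (2 * (∫ x in (0:ℝ)..L, (Φx x + Ψ x)^2)
        + 2 * (c_p * ∫ x in (0:ℝ)..L, (Ψx x)^2))) :=
    mul_le_mul_of_nonneg_left (hPφ.trans (mul_le_mul_of_nonneg_left e5 hcp.le))
      (by positivity)
  have e3 : ρ₃/2 * (∫ x in (0:ℝ)..L, (W x)^2)
      ≤ ρ₃/2 * (c_p * ∫ x in (0:ℝ)..L, (Wx x)^2) :=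
    mul_le_mul_of_nonneg_left hPw (by positivity)
  have e4 : |β|/2 * (∫ x in (0:ℝ)..L, (W x)^2)
      ≤ |β|/2 * (c_p * ∫ x in (0:ℝ)..L, (Wx x)^2) :=
    mul_le_mul_of_nonneg_left hPw (by positivity)
  have e6 : |β|/2 * (∫ x in (0:ℝ)..L, (Φx x)^2)
      ≤ |β|/2 * (2 * (∫ x in (0:ℝ)..L, (Φx x + Ψ x)^2)
        + 2 * (c_p * ∫ x in (0:ℝ)..L, (Ψx x)^2)) :=
    mul_le_mul_of_nonneg_left e5 (by positivity)
  -- final ξ products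
  have p1 := mul_le_mul_of_nonneg_right hx1 hA1
  have p2 := mul_le_mul_of_nonneg_right hx2 hA2
  have p4 := mul_le_mul_of_nonneg_right hx4 hA4
  have p5 := mul_le_mul_of_nonneg_right hx5 hA5
  have p6 := mul_le_mul_of_nonneg_right hx6 hA6
  have p7 := mul_le_mul_of_nonneg_right hx7 hA7
  have p8 := mul_le_mul_of_nonneg_right hx8 hA8
  have p3 : 0 ≤ ξ * lm * (∫ x in (0:ℝ)..L, (Φ x - U x)^2) :=
    mul_nonneg (mul_nonneg hξ0 hlm.le) hA3
  rw [hE]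
  linarith [habs, hT1, hT2, hy3, hy5, e1, e2, e3, e4, e6,
    p1, p2, p3, p4, p5, p6, p7, p8]

set_option maxHeartbeats 1000000 in
/-- equivalence of the Lyapunov functional with the energy. -/
theorem lyapunov_equivalent_to_energy
    {L ρ α lm μ ρ₁ K γ b ρ₃ δ κ β c_p : ℝ}
    (hL : 0 < L) (hρ : 0 < ρ) (hα : 0 < α) (hlm : 0 < lm) (hμ : 0 < μ)
    (hρ₁ : 0 < ρ₁) (hK : 0 < K) (hγ : 0 < γ) (hb : 0 < b) (hρ₃ : 0 < ρ₃)
    (hδ : 0 < δ) (hκ : 0 < κ) (hβ : β ≠ 0) (hcp : 0 < c_p)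
    (hpoin : ∀ f : ℝ → ℝ, ContDiff ℝ 1 f → f 0 = 0 → f L = 0 →
      (∫ x in (0:ℝ)..L, (f x)^2) ≤ c_p * ∫ x in (0:ℝ)..L, (deriv f x)^2) :
    ∃ ξ : ℝ, 0 < ξ ∧
      ∀ u φ ψ w : ℝ → ℝ → ℝ,
        IsShearSolution L ρ α lm μ ρ₁ K γ b ρ₃ δ κ β u φ ψ w →
        ∀ t : ℝ, 0 ≤ t →
          |I1 L ρ μ ρ₁ γ u φ t + I2 L ρ₃ κ β φ w t|
              ≤ ξ * energy L ρ α lm ρ₁ K b ρ₃ δ u φ ψ w t ∧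
          ∀ N : ℝ, ξ < N →
            (N - ξ) * energy L ρ α lm ρ₁ K b ρ₃ δ u φ ψ w t
                ≤ N * energy L ρ α lm ρ₁ K b ρ₃ δ u φ ψ w t
                    + I1 L ρ μ ρ₁ γ u φ t + I2 L ρ₃ κ β φ w t ∧
              N * energy L ρ α lm ρ₁ K b ρ₃ δ u φ ψ w t
                    + I1 L ρ μ ρ₁ γ u φ t + I2 L ρ₃ κ β φ w t
                ≤ (N + ξ) * energy L ρ α lm ρ₁ K b ρ₃ δ u φ ψ w t := by
  set ξ : ℝ := 2*((ρ+μ)*c_p/2)/α + 2*((ρ₁+γ)*c_p + |β|)/K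
      + 2*((ρ₁+γ)*c_p^2 + |β| * c_p)/b + 2*(κ/2 + (ρ₃+|β|)*c_p/2)/δ + 1 with hξdef
  have n2 : (0:ℝ) ≤ 2*((ρ+μ)*c_p/2)/α := div_nonneg (by positivity) hα.le
  have n5 : (0:ℝ) ≤ 2*((ρ₁+γ)*c_p + |β|)/K := div_nonneg (by positivity) hK.le
  have n6 : (0:ℝ) ≤ 2*((ρ₁+γ)*c_p^2 + |β| * c_p)/b := div_nonneg (by positivity) hb.le
  have n8 : (0:ℝ) ≤ 2*(κ/2 + (ρ₃+|β|)*c_p/2)/δ := div_nonneg (by positivity) hδ.le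
  have hξ1 : (1:ℝ) ≤ ξ := by rw [hξdef]; linarith
  have hξpos : (0:ℝ) < ξ := by linarith
  have aux : ∀ C coef S : ℝ, 0 < coef → 2*C/coef ≤ S → C ≤ S*coef/2 := by
    intro C coef S hc hS
    rw [div_le_iff₀ hc] at hS
    linarith
  have hx1 : ρ/2 ≤ ξ*ρ/2 := by nlinarith
  have hx4 : ρ₁/2 ≤ ξ*ρ₁/2 := by nlinarith
  have hx7 : ρ₃/2 ≤ ξ*ρ₃/2 := by nlinarith
  have hx2 : (ρ+μ)*c_p/2 ≤ ξ*α/2 :=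
    aux _ _ _ hα (by rw [hξdef]; linarith)
  have hx5 : (ρ₁+γ)*c_p + |β| ≤ ξ*K/2 :=
    aux _ _ _ hK (by rw [hξdef]; linarith)
  have hx6 : (ρ₁+γ)*c_p^2 + |β| * c_p ≤ ξ*b/2 :=
    aux _ _ _ hb (by rw [hξdef]; linarith)
  have hx8 : κ/2 + (ρ₃+|β|)*c_p/2 ≤ ξ*δ/2 :=
    aux _ _ _ hδ (by rw [hξdef]; linarith)
  refine ⟨ξ, hξpos, ?_⟩
  intro u φ ψ w hs t ht
  obtain ⟨bu0, buL, bφ0, bφL, bψ0, bψL, bw0, bwL⟩ := hs.bc t ht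
  have hPu := hpoin (fun y => u y t) (contDiff_slice hs.smooth_u t) bu0 buL
  have hPφ := hpoin (fun y => φ y t) (contDiff_slice hs.smooth_phi t) bφ0 bφL
  have hPψ := hpoin (fun y => ψ y t) (contDiff_slice hs.smooth_psi t) bψ0 bψL
  have hPw := hpoin (fun y => w y t) (contDiff_slice hs.smooth_w t) bw0 bwL
  have hmain : |I1 L ρ μ ρ₁ γ u φ t + I2 L ρ₃ κ β φ w t|
      ≤ ξ * energy L ρ α lm ρ₁ K b ρ₃ δ u φ ψ w t := by
    unfold I1 I2 energy
    exact key_bound hL hρ hlm hμ hρ₁ hγ hρ₃ hκ hcp hξpos.le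
      (fun x => u x t) (fun x => φ x t) (fun x => ψ x t) (fun x => w x t)
      (fun x => pdt u x t) (fun x => pdt φ x t) (fun x => pdt w x t)
      (fun x => pdx u x t) (fun x => pdx φ x t) (fun x => pdx ψ x t)
      (fun x => pdx w x t)
      (cont_slice hs.smooth_u t) (cont_slice hs.smooth_phi t)
      (cont_slice hs.smooth_psi t) (cont_slice hs.smooth_w t)
      (cont_pdt hs.smooth_u t) (cont_pdt hs.smooth_phi t) (cont_pdt hs.smooth_w t)
      (cont_pdx hs.smooth_u t) (cont_pdx hs.smooth_phi t) (cont_pdx hs.smooth_psi t)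
      (cont_pdx hs.smooth_w t)
      hPu hPφ hPψ hPw hx1 hx2 hx4 hx5 hx6 hx7 hx8
  refine ⟨hmain, ?_⟩
  intro N hN
  obtain ⟨h1, h2⟩ := abs_le.mp hmain
  constructor <;> nlinarith
end
end

section
/- Let (u, φ, ψ, w) be a classical solution of the suspension-bridge Shear beam system in thermoelasticity of type III, let c_p > 0 be a Poincaré constant for (0,L), and define I₁(t) = ∫₀^L ( ρ u_t u + (μ/2) u² ) dx + ∫₀^L ( ρ₁ φ_t φ + (γ/2) φ² ) dx and I₂(t) = ρ₃ ∫₀^L w_t w dx + (κ/2) ∫₀^L w_x² dx + β ∫₀^L φ_x w dx. Then there exist constants N > 0 and ζ₂ > 0, depending only on the constitutive constants, L and c_p, such that the Lyapunov functional L(t) = N E(t) + I₁(t) + I₂(t) satisfies dL(t)/dt ≤ −ζ₂ E(t) for all t > 0. -/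
open MeasureTheory Set

noncomputable section

namespace SB

variable {E : Type*} [NormedAddCommGroup E] [NormedSpace ℝ E]

lemma hasDerivAt_fst (F : ℝ × ℝ → E) {x t : ℝ} (hF : DifferentiableAt ℝ F (x, t)) :
    HasDerivAt (fun y => F (y, t)) (fderiv ℝ F (x, t) (1, 0)) x := by
  have h : HasDerivAt (fun y : ℝ => (y, t)) ((1 : ℝ), (0 : ℝ)) x :=
    (hasDerivAt_id x).prodMk (hasDerivAt_const x t)
  simpa [Function.comp_def] using hF.hasFDerivAt.comp_hasDerivAt x h

lemma hasDerivAt_snd (F : ℝ × ℝ → E) {x t : ℝ} (hF : DifferentiableAt ℝ F (x, t)) :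
    HasDerivAt (fun s => F (x, s)) (fderiv ℝ F (x, t) (0, 1)) t := by
  have h : HasDerivAt (fun s : ℝ => (x, s)) ((0 : ℝ), (1 : ℝ)) t :=
    (hasDerivAt_const t x).prodMk (hasDerivAt_id t)
  simpa [Function.comp_def] using hF.hasFDerivAt.comp_hasDerivAt t h

variable {f : ℝ → ℝ → ℝ}

lemma pdt_eq {x t : ℝ} (hf : DifferentiableAt ℝ (fun p : ℝ × ℝ => f p.1 p.2) (x, t)) :
    pdt f x t = fderiv ℝ (fun p : ℝ × ℝ => f p.1 p.2) (x, t) (0, 1) :=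
  (hasDerivAt_snd _ hf).deriv

lemma pdx_eq {x t : ℝ} (hf : DifferentiableAt ℝ (fun p : ℝ × ℝ => f p.1 p.2) (x, t)) :
    pdx f x t = fderiv ℝ (fun p : ℝ × ℝ => f p.1 p.2) (x, t) (1, 0) :=
  (hasDerivAt_fst _ hf).deriv

lemma contDiff_pdt {n m : ℕ} (hf : ContDiff ℝ (n+1) (fun p : ℝ × ℝ => f p.1 p.2)) (hm : m ≤ n) :
    ContDiff ℝ m (fun p : ℝ × ℝ => pdt f p.1 p.2) := by
  have hd : Differentiable ℝ (fun p : ℝ × ℝ => f p.1 p.2) :=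
    hf.differentiable (by simp)
  have : (fun p : ℝ × ℝ => pdt f p.1 p.2)
      = fun p : ℝ × ℝ => fderiv ℝ (fun p : ℝ × ℝ => f p.1 p.2) p (0, 1) := by
    funext p
    exact pdt_eq (hd _)
  rw [this]
  exact (hf.fderiv_right (by exact_mod_cast Nat.succ_le_succ hm)).clm_apply contDiff_const

lemma contDiff_pdx {n m : ℕ} (hf : ContDiff ℝ (n+1) (fun p : ℝ × ℝ => f p.1 p.2)) (hm : m ≤ n) :
    ContDiff ℝ m (fun p : ℝ × ℝ => pdx f p.1 p.2) := by
  have hd : Differentiable ℝ (fun p : ℝ × ℝ => f p.1 p.2) :=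
    hf.differentiable (by simp)
  have : (fun p : ℝ × ℝ => pdx f p.1 p.2)
      = fun p : ℝ × ℝ => fderiv ℝ (fun p : ℝ × ℝ => f p.1 p.2) p (1, 0) := by
    funext p
    exact pdx_eq (hd _)
  rw [this]
  exact (hf.fderiv_right (by exact_mod_cast Nat.succ_le_succ hm)).clm_apply contDiff_const

lemma pdt_pdx_comm (hf : ContDiff ℝ 2 (fun p : ℝ × ℝ => f p.1 p.2)) (x t : ℝ) :
    pdt (pdx f) x t = pdx (pdt f) x t := by
  set F := (fun p : ℝ × ℝ => f p.1 p.2) with hF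
  have hd : Differentiable ℝ F := hf.differentiable (by norm_num)
  have hG : ContDiff ℝ 1 (fderiv ℝ F) := hf.fderiv_right (by norm_num)
  have h1 : pdt (pdx f) x t = fderiv ℝ (fderiv ℝ F) (x, t) (0, 1) (1, 0) := by
    have he : (fun s => pdx f x s) = fun s => fderiv ℝ F (x, s) (1, 0) :=
      funext fun s => pdx_eq (hd _)
    have H : HasDerivAt (fun s => fderiv ℝ F (x, s) ((1:ℝ), (0:ℝ)))
        (fderiv ℝ (fderiv ℝ F) (x, t) (0, 1) (1, 0)) t := by
      simpa using
        (hasDerivAt_snd (fderiv ℝ F) ((hG.differentiable one_ne_zero) _)).clm_apply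
          (hasDerivAt_const t ((1:ℝ), (0:ℝ)))
    rw [pdt, he]
    exact H.deriv
  have h2 : pdx (pdt f) x t = fderiv ℝ (fderiv ℝ F) (x, t) (1, 0) (0, 1) := by
    have he : (fun y => pdt f y t) = fun y => fderiv ℝ F (y, t) (0, 1) :=
      funext fun y => pdt_eq (hd _)
    have H : HasDerivAt (fun y => fderiv ℝ F (y, t) ((0:ℝ), (1:ℝ)))
        (fderiv ℝ (fderiv ℝ F) (x, t) (1, 0) (0, 1)) x := by
      simpa using
        (hasDerivAt_fst (fderiv ℝ F) ((hG.differentiable one_ne_zero) _)).clm_apply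
          (hasDerivAt_const x ((0:ℝ), (1:ℝ)))
    rw [pdx, he]
    exact H.deriv
  rw [h1, h2, hf.contDiffAt.isSymmSndFDerivAt (by simp)]

lemma contDiff_slice_t {n : ℕ} (hf : ContDiff ℝ n (fun p : ℝ × ℝ => f p.1 p.2)) (x : ℝ) :
    ContDiff ℝ n (fun s => f x s) := hf.comp (contDiff_const.prodMk contDiff_id)

lemma contDiff_slice_x {n : ℕ} (hf : ContDiff ℝ n (fun p : ℝ × ℝ => f p.1 p.2)) (t : ℝ) :
    ContDiff ℝ n (fun y => f y t) := hf.comp (contDiff_id.prodMk contDiff_const)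

lemma hasDerivAt_param (hf : ContDiff ℝ 1 (fun p : ℝ × ℝ => f p.1 p.2))
    (hpdt : Continuous (fun p : ℝ × ℝ => pdt f p.1 p.2)) (a c t : ℝ) :
    HasDerivAt (fun s => ∫ x in a..c, f x s) (∫ x in a..c, pdt f x t) t := by
  obtain ⟨C, hC⟩ : ∃ C, ∀ p ∈ (uIcc a c ×ˢ Icc (t-1) (t+1) : Set (ℝ × ℝ)),
      ‖pdt f p.1 p.2‖ ≤ C :=
    (isCompact_uIcc.prod isCompact_Icc).exists_bound_of_continuousOn hpdt.continuousOn
  have key := intervalIntegral.hasDerivAt_integral_of_dominated_loc_of_deriv_le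
    (F := fun s x => f x s) (F' := fun s x => pdt f x s) (x₀ := t) (a := a) (b := c)
    (bound := fun _ => C) (μ := volume) (s := Metric.ball t 1) (Metric.ball_mem_nhds t one_pos)
    (Filter.Eventually.of_forall fun s =>
      ((hf.continuous.comp (continuous_id.prodMk continuous_const)).aestronglyMeasurable))
    ((hf.continuous.comp (continuous_id.prodMk continuous_const)).intervalIntegrable a c)
    ((hpdt.comp (continuous_id.prodMk continuous_const)).aestronglyMeasurable)
    (Filter.Eventually.of_forall fun x hx s hs => by
      apply hC (x, s)
      refine ⟨uIoc_subset_uIcc hx, ?_⟩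
      have h1 := mem_ball_iff_norm.mp hs
      have h2 := abs_lt.mp (by simpa [Real.norm_eq_abs] using h1)
      constructor <;> linarith [h2.1, h2.2])
    (intervalIntegrable_const)
    (Filter.Eventually.of_forall fun x hx s hs => by
      have hdiff : DifferentiableAt ℝ (fun s => f x s) s :=
        ((contDiff_slice_t (n := 1) hf x).differentiable (by simp)) s
      exact hdiff.hasDerivAt)
  exact key.2

/-- specialized corollaries avoiding casts -/
lemma pdt_c3 (hf : ContDiff ℝ 3 (fun p : ℝ × ℝ => f p.1 p.2)) :
    ContDiff ℝ 2 (fun p : ℝ × ℝ => pdt f p.1 p.2) := by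
  have := contDiff_pdt (n := 2) (m := 2) (f := f) (by exact_mod_cast hf) le_rfl
  exact_mod_cast this

lemma pdx_c3 (hf : ContDiff ℝ 3 (fun p : ℝ × ℝ => f p.1 p.2)) :
    ContDiff ℝ 2 (fun p : ℝ × ℝ => pdx f p.1 p.2) := by
  have := contDiff_pdx (n := 2) (m := 2) (f := f) (by exact_mod_cast hf) le_rfl
  exact_mod_cast this

lemma pdt_c2 (hf : ContDiff ℝ 2 (fun p : ℝ × ℝ => f p.1 p.2)) :
    ContDiff ℝ 1 (fun p : ℝ × ℝ => pdt f p.1 p.2) := by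
  have := contDiff_pdt (n := 1) (m := 1) (f := f) (by exact_mod_cast hf) le_rfl
  exact_mod_cast this

lemma pdx_c2 (hf : ContDiff ℝ 2 (fun p : ℝ × ℝ => f p.1 p.2)) :
    ContDiff ℝ 1 (fun p : ℝ × ℝ => pdx f p.1 p.2) := by
  have := contDiff_pdx (n := 1) (m := 1) (f := f) (by exact_mod_cast hf) le_rfl
  exact_mod_cast this

lemma pdt_c1 (hf : ContDiff ℝ 1 (fun p : ℝ × ℝ => f p.1 p.2)) :
    Continuous (fun p : ℝ × ℝ => pdt f p.1 p.2) := by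
  have := contDiff_pdt (n := 0) (m := 0) (f := f) (by exact_mod_cast hf) le_rfl
  exact this.continuous

lemma pdx_c1 (hf : ContDiff ℝ 1 (fun p : ℝ × ℝ => f p.1 p.2)) :
    Continuous (fun p : ℝ × ℝ => pdx f p.1 p.2) := by
  have := contDiff_pdx (n := 0) (m := 0) (f := f) (by exact_mod_cast hf) le_rfl
  exact this.continuous

lemma contDiff_c2_of_c3 (hf : ContDiff ℝ 3 (fun p : ℝ × ℝ => f p.1 p.2)) :
    ContDiff ℝ 2 (fun p : ℝ × ℝ => f p.1 p.2) := hf.of_le (by norm_num)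

lemma contDiff_c1_of_c2 (hf : ContDiff ℝ 2 (fun p : ℝ × ℝ => f p.1 p.2)) :
    ContDiff ℝ 1 (fun p : ℝ × ℝ => f p.1 p.2) := hf.of_le (by norm_num)

/-- time slice HasDerivAt with pdt value -/
lemma hasDerivAt_time (hf : ContDiff ℝ 1 (fun p : ℝ × ℝ => f p.1 p.2)) (x t : ℝ) :
    HasDerivAt (fun s => f x s) (pdt f x t) t :=
  (((contDiff_slice_t hf x).differentiable (by simp)) t).hasDerivAt

/-- space slice HasDerivAt with pdx value -/
lemma hasDerivAt_space (hf : ContDiff ℝ 1 (fun p : ℝ × ℝ => f p.1 p.2)) (x t : ℝ) :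
    HasDerivAt (fun y => f y t) (pdx f x t) x :=
  (((contDiff_slice_x hf t).differentiable (by simp)) x).hasDerivAt

/-- if f vanishes on a half-line in time, so does its time derivative -/
lemma pdt_zero_of_zero {x t : ℝ} (ht : 0 < t) (h : ∀ s, 0 ≤ s → f x s = 0) :
    pdt f x t = 0 := by
  have he : (fun s => f x s) =ᶠ[nhds t] fun _ => (0 : ℝ) := by
    filter_upwards [isOpen_Ioi.mem_nhds ht] with s hs
    exact h s (le_of_lt hs)
  rw [pdt, he.deriv_eq, deriv_const]

end SB

lemma SB.sq_split (a c : ℝ) : a^2 ≤ 2 * (a + c)^2 + 2 * c^2 := by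
  nlinarith [sq_nonneg (a + 2 * c)]

lemma SB.final_arith {ρ α lm μ ρ₁ K γ b ρ₃ δ κ c_p ε cβ N β j1 j2 j3 j4 j5 j6 j7 j8 jb jd je jc : ℝ}
    (hα : 0 < α) (hlm : 0 < lm) (hδ : 0 < δ) (hρ₃ : 0 < ρ₃) (hε : 0 < ε) (hcβ : 0 < cβ)
    (hNμ : 3/2 * ρ ≤ N * μ) (hNγ : 3/2 * ρ₁ ≤ N * γ) (hNκ : c_p * (3/2 * ρ₃ + cβ) ≤ N * κ)
    (hε1 : ε ≤ K/4) (hε2 : ε * c_p ≤ b/4)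
    (n1 : 0 ≤ j1) (n2 : 0 ≤ j2) (n3 : 0 ≤ j3) (n4 : 0 ≤ j4) (n5 : 0 ≤ j5) (n6 : 0 ≤ j6)
    (n7 : 0 ≤ j7) (n8 : 0 ≤ j8) (nb : 0 ≤ jb) (nd : 0 ≤ jd)
    (hPψ : jd ≤ c_p * j6) (hPwt : j7 ≤ c_p * jb)
    (hE2 : je ≤ 2 * j5 + 2 * jd)
    (hYoung : 2 * β * jc ≤ ε * je + cβ * j7) :
    (ρ - N * μ) * j1 + (ρ₁ - N * γ) * j4 + (-(N * κ)) * jb + ρ₃ * j7 + (-α) * j2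
      + (-lm) * j3 + (-K) * j5 + (-b) * j6 + (-δ) * j8 + (2 * β) * jc
      ≤ -1 * (1/2 * (ρ * j1 + α * j2 + lm * j3 + ρ₁ * j4 + K * j5 + b * j6
        + ρ₃ * j7 + δ * j8)) := by
  have p1 : 0 ≤ (N * μ - 3/2 * ρ) * j1 := mul_nonneg (by linarith) n1
  have p2 : 0 ≤ (N * γ - 3/2 * ρ₁) * j4 := mul_nonneg (by linarith) n4
  have p3 : 0 ≤ (N * κ - c_p * (3/2 * ρ₃ + cβ)) * jb := mul_nonneg (by linarith) nb
  have p4 : (3/2 * ρ₃ + cβ) * j7 ≤ (3/2 * ρ₃ + cβ) * (c_p * jb) :=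
    mul_le_mul_of_nonneg_left hPwt (by positivity)
  have p5 : ε * je ≤ ε * (2 * j5 + 2 * jd) := mul_le_mul_of_nonneg_left hE2 hε.le
  have p6 : ε * jd ≤ ε * (c_p * j6) := mul_le_mul_of_nonneg_left hPψ hε.le
  have p7 : 0 ≤ (K/4 - ε) * j5 := mul_nonneg (by linarith) n5
  have p8 : 0 ≤ (b/4 - ε * c_p) * j6 := mul_nonneg (by linarith) n6
  have p9 : 0 ≤ α * j2 := mul_nonneg hα.le n2
  have p10 : 0 ≤ lm * j3 := mul_nonneg hlm.le n3
  have p11 : 0 ≤ δ * j8 := mul_nonneg hδ.le n8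
  nlinarith [p1, p2, p3, p4, p5, p6, p7, p8, p9, p10, p11, hYoung]

set_option maxHeartbeats 2000000 in
/-- the Lyapunov functional decays at rate proportional to the energy. -/
theorem lyapunov_derivative_estimate
    {L ρ α lm μ ρ₁ K γ b ρ₃ δ κ β c_p : ℝ}
    (hL : 0 < L) (hρ : 0 < ρ) (hα : 0 < α) (hlm : 0 < lm) (hμ : 0 < μ)
    (hρ₁ : 0 < ρ₁) (hK : 0 < K) (hγ : 0 < γ) (hb : 0 < b) (hρ₃ : 0 < ρ₃)
    (hδ : 0 < δ) (hκ : 0 < κ) (hβ : β ≠ 0) (hcp : 0 < c_p)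
    (hpoin : ∀ f : ℝ → ℝ, ContDiff ℝ 1 f → f 0 = 0 → f L = 0 →
      (∫ x in (0:ℝ)..L, (f x)^2) ≤ c_p * ∫ x in (0:ℝ)..L, (deriv f x)^2) :
    ∃ N : ℝ, 0 < N ∧ ∃ ζ₂ : ℝ, 0 < ζ₂ ∧
      ∀ u φ ψ w : ℝ → ℝ → ℝ,
        IsShearSolution L ρ α lm μ ρ₁ K γ b ρ₃ δ κ β u φ ψ w →
        ∀ t : ℝ, 0 < t →
          ∃ d : ℝ,
            HasDerivAt (fun s => N * energy L ρ α lm ρ₁ K b ρ₃ δ u φ ψ w s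
              + I1 L ρ μ ρ₁ γ u φ s + I2 L ρ₃ κ β φ w s) d t ∧
            d ≤ -ζ₂ * energy L ρ α lm ρ₁ K b ρ₃ δ u φ ψ w t := by
  have hβ2 : 0 < β ^ 2 := by positivity
  set ε : ℝ := min (K / 4) (b / (4 * c_p)) with hεdef
  have hε : 0 < ε := lt_min (by positivity) (by positivity)
  have hε1 : ε ≤ K / 4 := min_le_left _ _
  have hε2 : ε * c_p ≤ b / 4 := by
    have h := min_le_right (K / 4) (b / (4 * c_p))
    have : ε * c_p ≤ (b / (4 * c_p)) * c_p := by nlinarith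
    calc ε * c_p ≤ (b / (4 * c_p)) * c_p := this
      _ = b / 4 := by field_simp
  set cβ : ℝ := β ^ 2 / ε with hcβdef
  have hcβ : 0 < cβ := by positivity
  set N : ℝ := max (max (3 * ρ / (2 * μ)) (3 * ρ₁ / (2 * γ))) (c_p * (3 / 2 * ρ₃ + cβ) / κ)
    with hNdef
  have hN : 0 < N :=
    lt_of_lt_of_le (by positivity : (0:ℝ) < 3 * ρ / (2 * μ))
      (le_trans (le_max_left _ _) (le_max_left _ _))
  have hNμ : 3 / 2 * ρ ≤ N * μ := by
    have h : 3 * ρ / (2 * μ) ≤ N := le_trans (le_max_left _ _) (le_max_left _ _)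
    rw [div_le_iff₀ (by positivity)] at h
    nlinarith
  have hNγ : 3 / 2 * ρ₁ ≤ N * γ := by
    have h : 3 * ρ₁ / (2 * γ) ≤ N := le_trans (le_max_right _ _) (le_max_left _ _)
    rw [div_le_iff₀ (by positivity)] at h
    nlinarith
  have hNκ : c_p * (3 / 2 * ρ₃ + cβ) ≤ N * κ := by
    have h : c_p * (3 / 2 * ρ₃ + cβ) / κ ≤ N := le_max_right _ _
    rw [div_le_iff₀ (by positivity)] at h
    nlinarith
  refine ⟨N, hN, 1, one_pos, ?_⟩
  intro u φ ψ w S t ht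
  -- smoothness database
  have hu3 := S.smooth_u
  have hφ3 := S.smooth_phi
  have hψ3 := S.smooth_psi
  have hw3 := S.smooth_w
  have hu2 := SB.contDiff_c2_of_c3 hu3
  have hφ2 := SB.contDiff_c2_of_c3 hφ3
  have hψ2 := SB.contDiff_c2_of_c3 hψ3
  have hw2 := SB.contDiff_c2_of_c3 hw3
  have hu1 := SB.contDiff_c1_of_c2 hu2
  have hφ1 := SB.contDiff_c1_of_c2 hφ2
  have hψ1 := SB.contDiff_c1_of_c2 hψ2
  have hw1 := SB.contDiff_c1_of_c2 hw2
  have hut2 := SB.pdt_c3 hu3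
  have hφt2 := SB.pdt_c3 hφ3
  have hψt2 := SB.pdt_c3 hψ3
  have hwt2 := SB.pdt_c3 hw3
  have hux2 := SB.pdx_c3 hu3
  have hφx2 := SB.pdx_c3 hφ3
  have hψx2 := SB.pdx_c3 hψ3
  have hwx2 := SB.pdx_c3 hw3
  have hut1 := SB.contDiff_c1_of_c2 hut2
  have hφt1 := SB.contDiff_c1_of_c2 hφt2
  have hψt1 := SB.contDiff_c1_of_c2 hψt2
  have hwt1 := SB.contDiff_c1_of_c2 hwt2
  have hux1 := SB.contDiff_c1_of_c2 hux2
  have hφx1 := SB.contDiff_c1_of_c2 hφx2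
  have hψx1 := SB.contDiff_c1_of_c2 hψx2
  have hwx1 := SB.contDiff_c1_of_c2 hwx2
  have huxx1 := SB.pdx_c2 hux2
  have hφxx1 := SB.pdx_c2 hφx2
  have hψxx1 := SB.pdx_c2 hψx2
  have hwxx1 := SB.pdx_c2 hwx2
  have huxt1 := SB.pdx_c2 hut2
  have hφxt1 := SB.pdx_c2 hφt2
  have hψxt1 := SB.pdx_c2 hψt2
  have hwxt1 := SB.pdx_c2 hwt2
  have hwxxt0 := SB.pdx_c1 hwxt1
  -- the combined integrand
  set Φ : ℝ → ℝ → ℝ := fun x s =>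
    N * (1/2 * (ρ * (pdt u x s)^2 + α * (pdx u x s)^2 + lm * (φ x s - u x s)^2
      + ρ₁ * (pdt φ x s)^2 + K * (pdx φ x s + ψ x s)^2 + b * (pdx ψ x s)^2
      + ρ₃ * (pdt w x s)^2 + δ * (pdx w x s)^2))
    + ((ρ * pdt u x s * u x s + μ / 2 * (u x s)^2)
      + (ρ₁ * pdt φ x s * φ x s + γ / 2 * (φ x s)^2))
    + (ρ₃ * (pdt w x s * w x s) + κ / 2 * (pdx w x s)^2 + β * (pdx φ x s * w x s))
    with hΦdef
  have hΦ2 : ContDiff ℝ 2 (fun p : ℝ × ℝ => Φ p.1 p.2) := by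
    simp only [hΦdef]; fun_prop
  have hΦ1 := SB.contDiff_c1_of_c2 hΦ2
  -- step A : the Lyapunov functional is the integral of Φ
  have hLya : ∀ s : ℝ, N * energy L ρ α lm ρ₁ K b ρ₃ δ u φ ψ w s
      + I1 L ρ μ ρ₁ γ u φ s + I2 L ρ₃ κ β φ w s = ∫ x in (0:ℝ)..L, Φ x s := by
    intro s
    have cu : Continuous fun x => u x s := by
      exact hu1.continuous.comp (continuous_id.prodMk continuous_const)
    have cφ : Continuous fun x => φ x s := by
      exact hφ1.continuous.comp (continuous_id.prodMk continuous_const)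
    have cψ : Continuous fun x => ψ x s := by
      exact hψ1.continuous.comp (continuous_id.prodMk continuous_const)
    have cw : Continuous fun x => w x s := by
      exact hw1.continuous.comp (continuous_id.prodMk continuous_const)
    have cut : Continuous fun x => pdt u x s := by
      exact hut1.continuous.comp (continuous_id.prodMk continuous_const)
    have cφt : Continuous fun x => pdt φ x s := by
      exact hφt1.continuous.comp (continuous_id.prodMk continuous_const)
    have cwt : Continuous fun x => pdt w x s := by
      exact hwt1.continuous.comp (continuous_id.prodMk continuous_const)
    have cux : Continuous fun x => pdx u x s := by
      exact hux1.continuous.comp (continuous_id.prodMk continuous_const)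
    have cφx : Continuous fun x => pdx φ x s := by
      exact hφx1.continuous.comp (continuous_id.prodMk continuous_const)
    have cψx : Continuous fun x => pdx ψ x s := by
      exact hψx1.continuous.comp (continuous_id.prodMk continuous_const)
    have cwx : Continuous fun x => pdx w x s := by
      exact hwx1.continuous.comp (continuous_id.prodMk continuous_const)
    have i1 : IntervalIntegrable (fun x => N * (1/2 * (ρ * (pdt u x s)^2 + α * (pdx u x s)^2
        + lm * (φ x s - u x s)^2 + ρ₁ * (pdt φ x s)^2 + K * (pdx φ x s + ψ x s)^2
        + b * (pdx ψ x s)^2 + ρ₃ * (pdt w x s)^2 + δ * (pdx w x s)^2))) volume 0 L :=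
      Continuous.intervalIntegrable (by fun_prop) 0 L
    have i2 : IntervalIntegrable (fun x => ρ * pdt u x s * u x s + μ / 2 * (u x s)^2)
        volume 0 L := Continuous.intervalIntegrable (by fun_prop) 0 L
    have i3 : IntervalIntegrable (fun x => ρ₁ * pdt φ x s * φ x s + γ / 2 * (φ x s)^2)
        volume 0 L := Continuous.intervalIntegrable (by fun_prop) 0 L
    have i23 : IntervalIntegrable (fun x => (ρ * pdt u x s * u x s + μ / 2 * (u x s)^2)
        + (ρ₁ * pdt φ x s * φ x s + γ / 2 * (φ x s)^2)) volume 0 L :=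
      Continuous.intervalIntegrable (by fun_prop) 0 L
    have i4 : IntervalIntegrable (fun x => ρ₃ * (pdt w x s * w x s)) volume 0 L :=
      Continuous.intervalIntegrable (by fun_prop) 0 L
    have i5 : IntervalIntegrable (fun x => κ / 2 * (pdx w x s)^2) volume 0 L :=
      Continuous.intervalIntegrable (by fun_prop) 0 L
    have i45 : IntervalIntegrable (fun x => ρ₃ * (pdt w x s * w x s) + κ / 2 * (pdx w x s)^2)
        volume 0 L := Continuous.intervalIntegrable (by fun_prop) 0 L
    have i6 : IntervalIntegrable (fun x => β * (pdx φ x s * w x s)) volume 0 L :=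
      Continuous.intervalIntegrable (by fun_prop) 0 L
    have i123 : IntervalIntegrable (fun x => N * (1/2 * (ρ * (pdt u x s)^2 + α * (pdx u x s)^2
        + lm * (φ x s - u x s)^2 + ρ₁ * (pdt φ x s)^2 + K * (pdx φ x s + ψ x s)^2
        + b * (pdx ψ x s)^2 + ρ₃ * (pdt w x s)^2 + δ * (pdx w x s)^2))
        + ((ρ * pdt u x s * u x s + μ / 2 * (u x s)^2)
          + (ρ₁ * pdt φ x s * φ x s + γ / 2 * (φ x s)^2))) volume 0 L :=
      Continuous.intervalIntegrable (by fun_prop) 0 L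
    have i456 : IntervalIntegrable (fun x => (ρ₃ * (pdt w x s * w x s) + κ / 2 * (pdx w x s)^2)
        + β * (pdx φ x s * w x s)) volume 0 L :=
      Continuous.intervalIntegrable (by fun_prop) 0 L
    simp only [energy, I1, I2]
    simp only [← intervalIntegral.integral_const_mul]
    rw [← intervalIntegral.integral_add i2 i3, ← intervalIntegral.integral_add i1 i23,
      ← intervalIntegral.integral_add i4 i5, ← intervalIntegral.integral_add i45 i6,
      ← intervalIntegral.integral_add i123 i456]
  have HDL : HasDerivAt (fun s => ∫ x in (0:ℝ)..L, Φ x s)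
      (∫ x in (0:ℝ)..L, pdt Φ x t) t :=
    SB.hasDerivAt_param hΦ1 ((SB.pdt_c2 hΦ2).continuous) 0 L t
  refine ⟨∫ x in (0:ℝ)..L, pdt Φ x t, ?_, ?_⟩
  · have hfun : (fun s => N * energy L ρ α lm ρ₁ K b ρ₃ δ u φ ψ w s
        + I1 L ρ μ ρ₁ γ u φ s + I2 L ρ₃ κ β φ w s)
        = fun s => ∫ x in (0:ℝ)..L, Φ x s := funext hLya
    rw [hfun]
    exact HDL
  -- step C : pointwise formula for pdt Φ at time t
  have hDt : ∀ x : ℝ, pdt Φ x t =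
      N * (1/2 * (ρ * (2 * pdt u x t * pdt (pdt u) x t)
        + α * (2 * pdx u x t * pdx (pdt u) x t)
        + lm * (2 * (φ x t - u x t) * (pdt φ x t - pdt u x t))
        + ρ₁ * (2 * pdt φ x t * pdt (pdt φ) x t)
        + K * (2 * (pdx φ x t + ψ x t) * (pdx (pdt φ) x t + pdt ψ x t))
        + b * (2 * pdx ψ x t * pdx (pdt ψ) x t)
        + ρ₃ * (2 * pdt w x t * pdt (pdt w) x t)
        + δ * (2 * pdx w x t * pdx (pdt w) x t)))
      + ((ρ * (pdt (pdt u) x t * u x t + pdt u x t * pdt u x t)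
          + μ / 2 * (2 * u x t * pdt u x t))
        + (ρ₁ * (pdt (pdt φ) x t * φ x t + pdt φ x t * pdt φ x t)
          + γ / 2 * (2 * φ x t * pdt φ x t)))
      + (ρ₃ * (pdt (pdt w) x t * w x t + pdt w x t * pdt w x t)
        + κ / 2 * (2 * pdx w x t * pdx (pdt w) x t)
        + β * (pdx (pdt φ) x t * w x t + pdx φ x t * pdt w x t)) := by
    intro x
    have Hu := SB.hasDerivAt_time hu1 x t
    have Hφ := SB.hasDerivAt_time hφ1 x t
    have Hψ := SB.hasDerivAt_time hψ1 x t
    have Hw := SB.hasDerivAt_time hw1 x t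
    have Hut := SB.hasDerivAt_time hut1 x t
    have Hφt := SB.hasDerivAt_time hφt1 x t
    have Hψt := SB.hasDerivAt_time hψt1 x t
    have Hwt := SB.hasDerivAt_time hwt1 x t
    have Hux : HasDerivAt (fun s => pdx u x s) (pdx (pdt u) x t) t := by
      have h := SB.hasDerivAt_time hux1 x t
      rwa [SB.pdt_pdx_comm hu2 x t] at h
    have Hφx : HasDerivAt (fun s => pdx φ x s) (pdx (pdt φ) x t) t := by
      have h := SB.hasDerivAt_time hφx1 x t
      rwa [SB.pdt_pdx_comm hφ2 x t] at h
    have Hψx : HasDerivAt (fun s => pdx ψ x s) (pdx (pdt ψ) x t) t := by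
      have h := SB.hasDerivAt_time hψx1 x t
      rwa [SB.pdt_pdx_comm hψ2 x t] at h
    have Hwx : HasDerivAt (fun s => pdx w x s) (pdx (pdt w) x t) t := by
      have h := SB.hasDerivAt_time hwx1 x t
      rwa [SB.pdt_pdx_comm hw2 x t] at h
    have HS : HasDerivAt (fun s => ρ * (pdt u x s)^2 + α * (pdx u x s)^2
        + lm * (φ x s - u x s)^2 + ρ₁ * (pdt φ x s)^2 + K * (pdx φ x s + ψ x s)^2
        + b * (pdx ψ x s)^2 + ρ₃ * (pdt w x s)^2 + δ * (pdx w x s)^2)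
        (ρ * (2 * pdt u x t * pdt (pdt u) x t)
        + α * (2 * pdx u x t * pdx (pdt u) x t)
        + lm * (2 * (φ x t - u x t) * (pdt φ x t - pdt u x t))
        + ρ₁ * (2 * pdt φ x t * pdt (pdt φ) x t)
        + K * (2 * (pdx φ x t + ψ x t) * (pdx (pdt φ) x t + pdt ψ x t))
        + b * (2 * pdx ψ x t * pdx (pdt ψ) x t)
        + ρ₃ * (2 * pdt w x t * pdt (pdt w) x t)
        + δ * (2 * pdx w x t * pdx (pdt w) x t)) t := by
      have h1 : HasDerivAt (fun s => (pdt u x s)^2) (2 * pdt u x t * pdt (pdt u) x t) t := by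
        simpa using Hut.fun_pow 2
      have h2 : HasDerivAt (fun s => (pdx u x s)^2) (2 * pdx u x t * pdx (pdt u) x t) t := by
        simpa using Hux.fun_pow 2
      have h3 : HasDerivAt (fun s => (φ x s - u x s)^2)
          (2 * (φ x t - u x t) * (pdt φ x t - pdt u x t)) t := by
        simpa using (Hφ.sub Hu).fun_pow 2
      have h4 : HasDerivAt (fun s => (pdt φ x s)^2) (2 * pdt φ x t * pdt (pdt φ) x t) t := by
        simpa using Hφt.fun_pow 2
      have h5 : HasDerivAt (fun s => (pdx φ x s + ψ x s)^2)
          (2 * (pdx φ x t + ψ x t) * (pdx (pdt φ) x t + pdt ψ x t)) t := by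
        simpa using (Hφx.add Hψ).fun_pow 2
      have h6 : HasDerivAt (fun s => (pdx ψ x s)^2) (2 * pdx ψ x t * pdx (pdt ψ) x t) t := by
        simpa using Hψx.fun_pow 2
      have h7 : HasDerivAt (fun s => (pdt w x s)^2) (2 * pdt w x t * pdt (pdt w) x t) t := by
        simpa using Hwt.fun_pow 2
      have h8 : HasDerivAt (fun s => (pdx w x s)^2) (2 * pdx w x t * pdx (pdt w) x t) t := by
        simpa using Hwx.fun_pow 2
      exact (((((((h1.const_mul ρ).add (h2.const_mul α)).add (h3.const_mul lm)).add
        (h4.const_mul ρ₁)).add (h5.const_mul K)).add (h6.const_mul b)).add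
        (h7.const_mul ρ₃)).add (h8.const_mul δ)
    have HP1 : HasDerivAt (fun s => ρ * pdt u x s * u x s + μ / 2 * (u x s)^2)
        (ρ * (pdt (pdt u) x t * u x t + pdt u x t * pdt u x t)
          + μ / 2 * (2 * u x t * pdt u x t)) t := by
      have ha : HasDerivAt (fun s => ρ * pdt u x s * u x s)
          (ρ * (pdt (pdt u) x t * u x t + pdt u x t * pdt u x t)) t := by
        simpa [mul_assoc] using (Hut.mul Hu).const_mul ρ
      have hb' : HasDerivAt (fun s => μ / 2 * (u x s)^2) (μ / 2 * (2 * u x t * pdt u x t)) t := by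
        have : HasDerivAt (fun s => (u x s)^2) (2 * u x t * pdt u x t) t := by
          simpa using Hu.fun_pow 2
        exact this.const_mul _
      exact ha.add hb'
    have HP2 : HasDerivAt (fun s => ρ₁ * pdt φ x s * φ x s + γ / 2 * (φ x s)^2)
        (ρ₁ * (pdt (pdt φ) x t * φ x t + pdt φ x t * pdt φ x t)
          + γ / 2 * (2 * φ x t * pdt φ x t)) t := by
      have ha : HasDerivAt (fun s => ρ₁ * pdt φ x s * φ x s)
          (ρ₁ * (pdt (pdt φ) x t * φ x t + pdt φ x t * pdt φ x t)) t := by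
        simpa [mul_assoc] using (Hφt.mul Hφ).const_mul ρ₁
      have hb' : HasDerivAt (fun s => γ / 2 * (φ x s)^2) (γ / 2 * (2 * φ x t * pdt φ x t)) t := by
        have : HasDerivAt (fun s => (φ x s)^2) (2 * φ x t * pdt φ x t) t := by
          simpa using Hφ.fun_pow 2
        exact this.const_mul _
      exact ha.add hb'
    have HP3 : HasDerivAt (fun s => ρ₃ * (pdt w x s * w x s) + κ / 2 * (pdx w x s)^2
        + β * (pdx φ x s * w x s))
        (ρ₃ * (pdt (pdt w) x t * w x t + pdt w x t * pdt w x t)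
          + κ / 2 * (2 * pdx w x t * pdx (pdt w) x t)
          + β * (pdx (pdt φ) x t * w x t + pdx φ x t * pdt w x t)) t := by
      have ha : HasDerivAt (fun s => ρ₃ * (pdt w x s * w x s))
          (ρ₃ * (pdt (pdt w) x t * w x t + pdt w x t * pdt w x t)) t := by
        exact (Hwt.mul Hw).const_mul ρ₃
      have hb' : HasDerivAt (fun s => κ / 2 * (pdx w x s)^2)
          (κ / 2 * (2 * pdx w x t * pdx (pdt w) x t)) t := by
        have : HasDerivAt (fun s => (pdx w x s)^2) (2 * pdx w x t * pdx (pdt w) x t) t := by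
          simpa using Hwx.fun_pow 2
        exact this.const_mul _
      have hc' : HasDerivAt (fun s => β * (pdx φ x s * w x s))
          (β * (pdx (pdt φ) x t * w x t + pdx φ x t * pdt w x t)) t := by
        exact (Hφx.mul Hw).const_mul β
      exact (ha.add hb').add hc'
    have H : HasDerivAt (fun s => Φ x s) _ t :=
      (((HS.const_mul (1/2 : ℝ)).const_mul N).add (HP1.add HP2)).add HP3
    exact H.deriv
  -- boundary values vanish
  obtain ⟨b1, b2, b3, b4, b5, b6, b7, b8⟩ := S.bc t ht.le
  have z1 : pdt u 0 t = 0 := SB.pdt_zero_of_zero ht fun s hs => (S.bc s hs).1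
  have z2 : pdt u L t = 0 := SB.pdt_zero_of_zero ht fun s hs => (S.bc s hs).2.1
  have z3 : pdt φ 0 t = 0 := SB.pdt_zero_of_zero ht fun s hs => (S.bc s hs).2.2.1
  have z4 : pdt φ L t = 0 := SB.pdt_zero_of_zero ht fun s hs => (S.bc s hs).2.2.2.1
  have z5 : pdt ψ 0 t = 0 := SB.pdt_zero_of_zero ht fun s hs => (S.bc s hs).2.2.2.2.1
  have z6 : pdt ψ L t = 0 := SB.pdt_zero_of_zero ht fun s hs => (S.bc s hs).2.2.2.2.2.1
  have z7 : pdt w 0 t = 0 := SB.pdt_zero_of_zero ht fun s hs => (S.bc s hs).2.2.2.2.2.2.1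
  have z8 : pdt w L t = 0 := SB.pdt_zero_of_zero ht fun s hs => (S.bc s hs).2.2.2.2.2.2.2
  -- continuity of space slices at time t
  have cu : Continuous fun y => u y t :=
    hu1.continuous.comp (continuous_id.prodMk continuous_const)
  have cφ : Continuous fun y => φ y t :=
    hφ1.continuous.comp (continuous_id.prodMk continuous_const)
  have cψ : Continuous fun y => ψ y t :=
    hψ1.continuous.comp (continuous_id.prodMk continuous_const)
  have cw : Continuous fun y => w y t :=
    hw1.continuous.comp (continuous_id.prodMk continuous_const)
  have cut : Continuous fun y => pdt u y t :=
    hut1.continuous.comp (continuous_id.prodMk continuous_const)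
  have cφt : Continuous fun y => pdt φ y t :=
    hφt1.continuous.comp (continuous_id.prodMk continuous_const)
  have cψt : Continuous fun y => pdt ψ y t :=
    hψt1.continuous.comp (continuous_id.prodMk continuous_const)
  have cwt : Continuous fun y => pdt w y t :=
    hwt1.continuous.comp (continuous_id.prodMk continuous_const)
  have cux : Continuous fun y => pdx u y t :=
    hux1.continuous.comp (continuous_id.prodMk continuous_const)
  have cφx : Continuous fun y => pdx φ y t :=
    hφx1.continuous.comp (continuous_id.prodMk continuous_const)
  have cψx : Continuous fun y => pdx ψ y t :=
    hψx1.continuous.comp (continuous_id.prodMk continuous_const)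
  have cwx : Continuous fun y => pdx w y t :=
    hwx1.continuous.comp (continuous_id.prodMk continuous_const)
  have cuxx : Continuous fun y => pdx (pdx u) y t :=
    huxx1.continuous.comp (continuous_id.prodMk continuous_const)
  have cφxx : Continuous fun y => pdx (pdx φ) y t :=
    hφxx1.continuous.comp (continuous_id.prodMk continuous_const)
  have cψxx : Continuous fun y => pdx (pdx ψ) y t :=
    hψxx1.continuous.comp (continuous_id.prodMk continuous_const)
  have cwxx : Continuous fun y => pdx (pdx w) y t :=
    hwxx1.continuous.comp (continuous_id.prodMk continuous_const)
  have cuxt : Continuous fun y => pdx (pdt u) y t :=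
    huxt1.continuous.comp (continuous_id.prodMk continuous_const)
  have cφxt : Continuous fun y => pdx (pdt φ) y t :=
    hφxt1.continuous.comp (continuous_id.prodMk continuous_const)
  have cψxt : Continuous fun y => pdx (pdt ψ) y t :=
    hψxt1.continuous.comp (continuous_id.prodMk continuous_const)
  have cwxt : Continuous fun y => pdx (pdt w) y t :=
    hwxt1.continuous.comp (continuous_id.prodMk continuous_const)
  have cwxxt : Continuous fun y => pdx (pdx (pdt w)) y t :=
    hwxxt0.comp (continuous_id.prodMk continuous_const)
  -- the boundary function and its spatial derivative
  set Bf : ℝ → ℝ := fun y =>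
    N * α * (pdx u y t * pdt u y t) + N * K * ((pdx φ y t + ψ y t) * pdt φ y t)
    + N * b * (pdx ψ y t * pdt ψ y t) - N * β * (pdt φ y t * pdt w y t)
    + N * δ * (pdx w y t * pdt w y t) + N * κ * (pdt w y t * pdx (pdt w) y t)
    + α * (u y t * pdx u y t) + K * (φ y t * (pdx φ y t + ψ y t))
    + b * (ψ y t * pdx ψ y t) - β * (φ y t * pdt w y t)
    + δ * (w y t * pdx w y t) + κ * (w y t * pdx (pdt w) y t) with hBdef
  set BX : ℝ → ℝ := fun y =>
    N * α * (pdx (pdx u) y t * pdt u y t + pdx u y t * pdx (pdt u) y t)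
    + N * K * ((pdx (pdx φ) y t + pdx ψ y t) * pdt φ y t
        + (pdx φ y t + ψ y t) * pdx (pdt φ) y t)
    + N * b * (pdx (pdx ψ) y t * pdt ψ y t + pdx ψ y t * pdx (pdt ψ) y t)
    - N * β * (pdx (pdt φ) y t * pdt w y t + pdt φ y t * pdx (pdt w) y t)
    + N * δ * (pdx (pdx w) y t * pdt w y t + pdx w y t * pdx (pdt w) y t)
    + N * κ * (pdx (pdt w) y t * pdx (pdt w) y t + pdt w y t * pdx (pdx (pdt w)) y t)
    + α * (pdx u y t * pdx u y t + u y t * pdx (pdx u) y t)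
    + K * (pdx φ y t * (pdx φ y t + ψ y t) + φ y t * (pdx (pdx φ) y t + pdx ψ y t))
    + b * (pdx ψ y t * pdx ψ y t + ψ y t * pdx (pdx ψ) y t)
    - β * (pdx φ y t * pdt w y t + φ y t * pdx (pdt w) y t)
    + δ * (pdx w y t * pdx w y t + w y t * pdx (pdx w) y t)
    + κ * (pdx w y t * pdx (pdt w) y t + w y t * pdx (pdx (pdt w)) y t) with hBXdef
  have hBX : ∀ y : ℝ, HasDerivAt Bf (BX y) y := by
    intro y
    have Gu := SB.hasDerivAt_space hu1 y t
    have Gφ := SB.hasDerivAt_space hφ1 y t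
    have Gψ := SB.hasDerivAt_space hψ1 y t
    have Gw := SB.hasDerivAt_space hw1 y t
    have Gut := SB.hasDerivAt_space hut1 y t
    have Gφt := SB.hasDerivAt_space hφt1 y t
    have Gψt := SB.hasDerivAt_space hψt1 y t
    have Gwt := SB.hasDerivAt_space hwt1 y t
    have Gux := SB.hasDerivAt_space hux1 y t
    have Gφx := SB.hasDerivAt_space hφx1 y t
    have Gψx := SB.hasDerivAt_space hψx1 y t
    have Gwx := SB.hasDerivAt_space hwx1 y t
    have Gwxt := SB.hasDerivAt_space hwxt1 y t
    rw [hBdef, hBXdef]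
    exact (((((((((((((Gux.mul Gut).const_mul (N * α)).add
      (((Gφx.add Gψ).mul Gφt).const_mul (N * K))).add
      ((Gψx.mul Gψt).const_mul (N * b))).sub
      ((Gφt.mul Gwt).const_mul (N * β))).add
      ((Gwx.mul Gwt).const_mul (N * δ))).add
      ((Gwt.mul Gwxt).const_mul (N * κ))).add
      ((Gu.mul Gux).const_mul α)).add
      ((Gφ.mul (Gφx.add Gψ)).const_mul K)).add
      ((Gψ.mul Gψx).const_mul b)).sub
      ((Gφ.mul Gwt).const_mul β)).add
      ((Gw.mul Gwx).const_mul δ)).add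
      ((Gw.mul Gwxt).const_mul κ))
  have hBXint : IntervalIntegrable BX volume 0 L := by
    rw [hBXdef]
    exact Continuous.intervalIntegrable (by fun_prop) 0 L
  have hB0 : Bf 0 = 0 := by
    rw [hBdef]
    simp only [b1, b3, b5, b7, z1, z3, z5, z7]
    ring
  have hBL : Bf L = 0 := by
    rw [hBdef]
    simp only [b2, b4, b6, b8, z2, z4, z6, z8]
    ring
  have hFTC : (∫ y in (0:ℝ)..L, BX y) = 0 := by
    have h := intervalIntegral.integral_eq_sub_of_hasDerivAt
      (f := Bf) (f' := BX) (fun y _ => hBX y) hBXint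
    rw [h, hB0, hBL, sub_zero]
  -- the residual function
  set Rf : ℝ → ℝ := fun y =>
    (ρ - N * μ) * (pdt u y t)^2 + ((ρ₁ - N * γ) * (pdt φ y t)^2
    + ((-(N * κ)) * (pdx (pdt w) y t)^2 + (ρ₃ * (pdt w y t)^2
    + ((-α) * (pdx u y t)^2 + ((-lm) * (φ y t - u y t)^2
    + ((-K) * (pdx φ y t + ψ y t)^2 + ((-b) * (pdx ψ y t)^2
    + ((-δ) * (pdx w y t)^2 + (2 * β) * (pdx φ y t * pdt w y t)))))))))
    with hRdef
  have hRint : IntervalIntegrable Rf volume 0 L := by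
    rw [hRdef]
    exact Continuous.intervalIntegrable (by fun_prop) 0 L
  -- a.e. identity on the open interval, using the four PDEs
  have hae : ∀ y ∈ Ioo (0:ℝ) L, pdt Φ y t = BX y + Rf y := by
    intro y hy
    have h1 := S.eq1 y hy t ht
    have h2 := S.eq2 y hy t ht
    have h3 := S.eq3 y hy t ht
    have h4 := S.eq4 y hy t ht
    have hsum : pdx (fun a s => pdx φ a s + ψ a s) y t
        = pdx (pdx φ) y t + pdx ψ y t := by
      have d1 : DifferentiableAt ℝ (fun a => pdx φ a t) y :=
        ((SB.contDiff_slice_x hφx1 t).differentiable (by simp)) y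
      have d2 : DifferentiableAt ℝ (fun a => ψ a t) y :=
        ((SB.contDiff_slice_x hψ1 t).differentiable (by simp)) y
      simpa [pdx] using deriv_fun_add d1 d2
    rw [hsum] at h2
    rw [hDt y, hBXdef, hRdef]
    linear_combination (N * pdt u y t + u y t) * h1 + (N * pdt φ y t + φ y t) * h2
      + (N * pdt ψ y t + ψ y t) * h3 + (N * pdt w y t + w y t) * h4
  -- value of the derivative
  have hd_eq : (∫ x in (0:ℝ)..L, pdt Φ x t) = ∫ y in (0:ℝ)..L, Rf y := by
    have hLvol : (volume : Measure ℝ) {L} = 0 := measure_singleton L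
    have hmem : ∀ᵐ x : ℝ, x ∈ uIoc (0:ℝ) L → pdt Φ x t = BX x + Rf x := by
      filter_upwards [compl_mem_ae_iff.mpr hLvol] with x hx hxI
      have hIoc : x ∈ Ioc (0:ℝ) L := by
        rwa [uIoc_of_le hL.le] at hxI
      have : x ∈ Ioo (0:ℝ) L := ⟨hIoc.1, lt_of_le_of_ne hIoc.2 (by simpa using hx)⟩
      exact hae x this
    rw [intervalIntegral.integral_congr_ae hmem,
      intervalIntegral.integral_add hBXint hRint, hFTC, zero_add]
  rw [hd_eq]
  have j1 : IntervalIntegrable (fun x => (ρ - N * μ) * (pdt u x t)^2) volume 0 L :=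
    Continuous.intervalIntegrable (by fun_prop) 0 L
  have j2 : IntervalIntegrable (fun x => (ρ₁ - N * γ) * (pdt φ x t)^2) volume 0 L :=
    Continuous.intervalIntegrable (by fun_prop) 0 L
  have j3 : IntervalIntegrable (fun x => (-(N * κ)) * (pdx (pdt w) x t)^2) volume 0 L :=
    Continuous.intervalIntegrable (by fun_prop) 0 L
  have j4 : IntervalIntegrable (fun x => ρ₃ * (pdt w x t)^2) volume 0 L :=
    Continuous.intervalIntegrable (by fun_prop) 0 L
  have j5 : IntervalIntegrable (fun x => (-α) * (pdx u x t)^2) volume 0 L :=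
    Continuous.intervalIntegrable (by fun_prop) 0 L
  have j6 : IntervalIntegrable (fun x => (-lm) * (φ x t - u x t)^2) volume 0 L :=
    Continuous.intervalIntegrable (by fun_prop) 0 L
  have j7 : IntervalIntegrable (fun x => (-K) * (pdx φ x t + ψ x t)^2) volume 0 L :=
    Continuous.intervalIntegrable (by fun_prop) 0 L
  have j8 : IntervalIntegrable (fun x => (-b) * (pdx ψ x t)^2) volume 0 L :=
    Continuous.intervalIntegrable (by fun_prop) 0 L
  have j9 : IntervalIntegrable (fun x => (-δ) * (pdx w x t)^2) volume 0 L :=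
    Continuous.intervalIntegrable (by fun_prop) 0 L
  have r2 : IntervalIntegrable (fun x => (ρ₁ - N * γ) * (pdt φ x t)^2 + ((-(N * κ)) * (pdx (pdt w) x t)^2 + (ρ₃ * (pdt w x t)^2 + ((-α) * (pdx u x t)^2 + ((-lm) * (φ x t - u x t)^2 + ((-K) * (pdx φ x t + ψ x t)^2 + ((-b) * (pdx ψ x t)^2 + ((-δ) * (pdx w x t)^2 + ((2 * β) * (pdx φ x t * pdt w x t)))))))))) volume 0 L :=
    Continuous.intervalIntegrable (by fun_prop) 0 L
  have r3 : IntervalIntegrable (fun x => (-(N * κ)) * (pdx (pdt w) x t)^2 + (ρ₃ * (pdt w x t)^2 + ((-α) * (pdx u x t)^2 + ((-lm) * (φ x t - u x t)^2 + ((-K) * (pdx φ x t + ψ x t)^2 + ((-b) * (pdx ψ x t)^2 + ((-δ) * (pdx w x t)^2 + ((2 * β) * (pdx φ x t * pdt w x t))))))))) volume 0 L :=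
    Continuous.intervalIntegrable (by fun_prop) 0 L
  have r4 : IntervalIntegrable (fun x => ρ₃ * (pdt w x t)^2 + ((-α) * (pdx u x t)^2 + ((-lm) * (φ x t - u x t)^2 + ((-K) * (pdx φ x t + ψ x t)^2 + ((-b) * (pdx ψ x t)^2 + ((-δ) * (pdx w x t)^2 + ((2 * β) * (pdx φ x t * pdt w x t)))))))) volume 0 L :=
    Continuous.intervalIntegrable (by fun_prop) 0 L
  have r5 : IntervalIntegrable (fun x => (-α) * (pdx u x t)^2 + ((-lm) * (φ x t - u x t)^2 + ((-K) * (pdx φ x t + ψ x t)^2 + ((-b) * (pdx ψ x t)^2 + ((-δ) * (pdx w x t)^2 + ((2 * β) * (pdx φ x t * pdt w x t))))))) volume 0 L :=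
    Continuous.intervalIntegrable (by fun_prop) 0 L
  have r6 : IntervalIntegrable (fun x => (-lm) * (φ x t - u x t)^2 + ((-K) * (pdx φ x t + ψ x t)^2 + ((-b) * (pdx ψ x t)^2 + ((-δ) * (pdx w x t)^2 + ((2 * β) * (pdx φ x t * pdt w x t)))))) volume 0 L :=
    Continuous.intervalIntegrable (by fun_prop) 0 L
  have r7 : IntervalIntegrable (fun x => (-K) * (pdx φ x t + ψ x t)^2 + ((-b) * (pdx ψ x t)^2 + ((-δ) * (pdx w x t)^2 + ((2 * β) * (pdx φ x t * pdt w x t))))) volume 0 L :=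
    Continuous.intervalIntegrable (by fun_prop) 0 L
  have r8 : IntervalIntegrable (fun x => (-b) * (pdx ψ x t)^2 + ((-δ) * (pdx w x t)^2 + ((2 * β) * (pdx φ x t * pdt w x t)))) volume 0 L :=
    Continuous.intervalIntegrable (by fun_prop) 0 L
  have r9 : IntervalIntegrable (fun x => (-δ) * (pdx w x t)^2 + ((2 * β) * (pdx φ x t * pdt w x t))) volume 0 L :=
    Continuous.intervalIntegrable (by fun_prop) 0 L
  have r10 : IntervalIntegrable (fun x => (2 * β) * (pdx φ x t * pdt w x t)) volume 0 L :=
    Continuous.intervalIntegrable (by fun_prop) 0 L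
  have hRsplit : (∫ y in (0:ℝ)..L, Rf y) = (ρ - N * μ) * (∫ x in (0:ℝ)..L, (pdt u x t)^2) + (ρ₁ - N * γ) * (∫ x in (0:ℝ)..L, (pdt φ x t)^2) + (-(N * κ)) * (∫ x in (0:ℝ)..L, (pdx (pdt w) x t)^2) + ρ₃ * (∫ x in (0:ℝ)..L, (pdt w x t)^2) + (-α) * (∫ x in (0:ℝ)..L, (pdx u x t)^2) + (-lm) * (∫ x in (0:ℝ)..L, (φ x t - u x t)^2) + (-K) * (∫ x in (0:ℝ)..L, (pdx φ x t + ψ x t)^2) + (-b) * (∫ x in (0:ℝ)..L, (pdx ψ x t)^2) + (-δ) * (∫ x in (0:ℝ)..L, (pdx w x t)^2) + (2 * β) * (∫ x in (0:ℝ)..L, (pdx φ x t * pdt w x t)) := by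
    simp only [hRdef]
    rw [intervalIntegral.integral_add j1 r2, intervalIntegral.integral_add j2 r3, intervalIntegral.integral_add j3 r4, intervalIntegral.integral_add j4 r5, intervalIntegral.integral_add j5 r6, intervalIntegral.integral_add j6 r7, intervalIntegral.integral_add j7 r8, intervalIntegral.integral_add j8 r9, intervalIntegral.integral_add j9 r10]
    simp only [intervalIntegral.integral_const_mul]
    ring
  have s1 : IntervalIntegrable (fun x => ρ * (pdt u x t)^2) volume 0 L :=
    Continuous.intervalIntegrable (by fun_prop) 0 L
  have s2 : IntervalIntegrable (fun x => ρ * (pdt u x t)^2 + α * (pdx u x t)^2) volume 0 L :=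
    Continuous.intervalIntegrable (by fun_prop) 0 L
  have s3 : IntervalIntegrable (fun x => ρ * (pdt u x t)^2 + α * (pdx u x t)^2 + lm * (φ x t - u x t)^2) volume 0 L :=
    Continuous.intervalIntegrable (by fun_prop) 0 L
  have s4 : IntervalIntegrable (fun x => ρ * (pdt u x t)^2 + α * (pdx u x t)^2 + lm * (φ x t - u x t)^2 + ρ₁ * (pdt φ x t)^2) volume 0 L :=
    Continuous.intervalIntegrable (by fun_prop) 0 L
  have s5 : IntervalIntegrable (fun x => ρ * (pdt u x t)^2 + α * (pdx u x t)^2 + lm * (φ x t - u x t)^2 + ρ₁ * (pdt φ x t)^2 + K * (pdx φ x t + ψ x t)^2) volume 0 L :=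
    Continuous.intervalIntegrable (by fun_prop) 0 L
  have s6 : IntervalIntegrable (fun x => ρ * (pdt u x t)^2 + α * (pdx u x t)^2 + lm * (φ x t - u x t)^2 + ρ₁ * (pdt φ x t)^2 + K * (pdx φ x t + ψ x t)^2 + b * (pdx ψ x t)^2) volume 0 L :=
    Continuous.intervalIntegrable (by fun_prop) 0 L
  have s7 : IntervalIntegrable (fun x => ρ * (pdt u x t)^2 + α * (pdx u x t)^2 + lm * (φ x t - u x t)^2 + ρ₁ * (pdt φ x t)^2 + K * (pdx φ x t + ψ x t)^2 + b * (pdx ψ x t)^2 + ρ₃ * (pdt w x t)^2) volume 0 L :=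
    Continuous.intervalIntegrable (by fun_prop) 0 L
  have e2 : IntervalIntegrable (fun x => α * (pdx u x t)^2) volume 0 L :=
    Continuous.intervalIntegrable (by fun_prop) 0 L
  have e3 : IntervalIntegrable (fun x => lm * (φ x t - u x t)^2) volume 0 L :=
    Continuous.intervalIntegrable (by fun_prop) 0 L
  have e4 : IntervalIntegrable (fun x => ρ₁ * (pdt φ x t)^2) volume 0 L :=
    Continuous.intervalIntegrable (by fun_prop) 0 L
  have e5 : IntervalIntegrable (fun x => K * (pdx φ x t + ψ x t)^2) volume 0 L :=
    Continuous.intervalIntegrable (by fun_prop) 0 L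
  have e6 : IntervalIntegrable (fun x => b * (pdx ψ x t)^2) volume 0 L :=
    Continuous.intervalIntegrable (by fun_prop) 0 L
  have e7 : IntervalIntegrable (fun x => ρ₃ * (pdt w x t)^2) volume 0 L :=
    Continuous.intervalIntegrable (by fun_prop) 0 L
  have e8 : IntervalIntegrable (fun x => δ * (pdx w x t)^2) volume 0 L :=
    Continuous.intervalIntegrable (by fun_prop) 0 L
  have henergy : energy L ρ α lm ρ₁ K b ρ₃ δ u φ ψ w t = 1/2 * (ρ * (∫ x in (0:ℝ)..L, (pdt u x t)^2) + α * (∫ x in (0:ℝ)..L, (pdx u x t)^2) + lm * (∫ x in (0:ℝ)..L, (φ x t - u x t)^2) + ρ₁ * (∫ x in (0:ℝ)..L, (pdt φ x t)^2) + K * (∫ x in (0:ℝ)..L, (pdx φ x t + ψ x t)^2) + b * (∫ x in (0:ℝ)..L, (pdx ψ x t)^2) + ρ₃ * (∫ x in (0:ℝ)..L, (pdt w x t)^2) + δ * (∫ x in (0:ℝ)..L, (pdx w x t)^2)) := by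
    simp only [energy]
    rw [intervalIntegral.integral_add s7 e8, intervalIntegral.integral_add s6 e7, intervalIntegral.integral_add s5 e6, intervalIntegral.integral_add s4 e5, intervalIntegral.integral_add s3 e4, intervalIntegral.integral_add s2 e3, intervalIntegral.integral_add s1 e2]
    simp only [intervalIntegral.integral_const_mul]
  -- nonnegativity of the squared integrals
  have nA1 : 0 ≤ ∫ x in (0:ℝ)..L, (pdt u x t)^2 :=
    intervalIntegral.integral_nonneg hL.le fun x _ => sq_nonneg _
  have nA2 : 0 ≤ ∫ x in (0:ℝ)..L, (pdx u x t)^2 :=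
    intervalIntegral.integral_nonneg hL.le fun x _ => sq_nonneg _
  have nA3 : 0 ≤ ∫ x in (0:ℝ)..L, (φ x t - u x t)^2 :=
    intervalIntegral.integral_nonneg hL.le fun x _ => sq_nonneg _
  have nA4 : 0 ≤ ∫ x in (0:ℝ)..L, (pdt φ x t)^2 :=
    intervalIntegral.integral_nonneg hL.le fun x _ => sq_nonneg _
  have nA5 : 0 ≤ ∫ x in (0:ℝ)..L, (pdx φ x t + ψ x t)^2 :=
    intervalIntegral.integral_nonneg hL.le fun x _ => sq_nonneg _
  have nA6 : 0 ≤ ∫ x in (0:ℝ)..L, (pdx ψ x t)^2 :=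
    intervalIntegral.integral_nonneg hL.le fun x _ => sq_nonneg _
  have nA7 : 0 ≤ ∫ x in (0:ℝ)..L, (pdt w x t)^2 :=
    intervalIntegral.integral_nonneg hL.le fun x _ => sq_nonneg _
  have nA8 : 0 ≤ ∫ x in (0:ℝ)..L, (pdx w x t)^2 :=
    intervalIntegral.integral_nonneg hL.le fun x _ => sq_nonneg _
  have nB1 : 0 ≤ ∫ x in (0:ℝ)..L, (pdx (pdt w) x t)^2 :=
    intervalIntegral.integral_nonneg hL.le fun x _ => sq_nonneg _
  have nD : 0 ≤ ∫ x in (0:ℝ)..L, (ψ x t)^2 :=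
    intervalIntegral.integral_nonneg hL.le fun x _ => sq_nonneg _
  -- Poincaré inequalities
  have hPψ : (∫ x in (0:ℝ)..L, (ψ x t)^2) ≤ c_p * ∫ x in (0:ℝ)..L, (pdx ψ x t)^2 := by
    have hf : ContDiff ℝ 1 fun y => ψ y t := hψ1.comp (contDiff_id.prodMk contDiff_const)
    have h := hpoin _ hf b5 b6
    simpa [pdx] using h
  have hPwt : (∫ x in (0:ℝ)..L, (pdt w x t)^2)
      ≤ c_p * ∫ x in (0:ℝ)..L, (pdx (pdt w) x t)^2 := by
    have hf : ContDiff ℝ 1 fun y => pdt w y t := hwt1.comp (contDiff_id.prodMk contDiff_const)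
    have h := hpoin _ hf z7 z8
    simpa [pdx] using h
  -- bound for the integral of (pdx φ)^2
  have hE2 : (∫ x in (0:ℝ)..L, (pdx φ x t)^2)
      ≤ 2 * (∫ x in (0:ℝ)..L, (pdx φ x t + ψ x t)^2) + 2 * (∫ x in (0:ℝ)..L, (ψ x t)^2) := by
    have ia : IntervalIntegrable (fun x => (pdx φ x t)^2) volume 0 L :=
      Continuous.intervalIntegrable (by fun_prop) 0 L
    have ib : IntervalIntegrable (fun x => 2 * (pdx φ x t + ψ x t)^2 + 2 * (ψ x t)^2)
        volume 0 L := Continuous.intervalIntegrable (by fun_prop) 0 L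
    have ic : IntervalIntegrable (fun x => 2 * (pdx φ x t + ψ x t)^2) volume 0 L :=
      Continuous.intervalIntegrable (by fun_prop) 0 L
    have id' : IntervalIntegrable (fun x => 2 * (ψ x t)^2) volume 0 L :=
      Continuous.intervalIntegrable (by fun_prop) 0 L
    have h := intervalIntegral.integral_mono_on hL.le ia ib fun x _ =>
      SB.sq_split (pdx φ x t) (ψ x t)
    rwa [intervalIntegral.integral_add ic id', intervalIntegral.integral_const_mul,
      intervalIntegral.integral_const_mul] at h
  -- Young inequality for the coupling term
  have hYoung : 2 * β * (∫ x in (0:ℝ)..L, (pdx φ x t * pdt w x t))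
      ≤ ε * (∫ x in (0:ℝ)..L, (pdx φ x t)^2) + cβ * (∫ x in (0:ℝ)..L, (pdt w x t)^2) := by
    have ia : IntervalIntegrable (fun x => 2 * β * (pdx φ x t * pdt w x t)) volume 0 L :=
      Continuous.intervalIntegrable (by fun_prop) 0 L
    have ib : IntervalIntegrable (fun x => ε * (pdx φ x t)^2 + cβ * (pdt w x t)^2)
        volume 0 L := Continuous.intervalIntegrable (by fun_prop) 0 L
    have ic : IntervalIntegrable (fun x => ε * (pdx φ x t)^2) volume 0 L :=
      Continuous.intervalIntegrable (by fun_prop) 0 L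
    have id' : IntervalIntegrable (fun x => cβ * (pdt w x t)^2) volume 0 L :=
      Continuous.intervalIntegrable (by fun_prop) 0 L
    have h := intervalIntegral.integral_mono_on hL.le ia ib fun x _ => by
      rw [hcβdef, ← sub_nonneg]
      have hkey : ε * (pdx φ x t)^2 + β^2/ε * (pdt w x t)^2
          - 2 * β * (pdx φ x t * pdt w x t)
          = (ε * pdx φ x t - β * pdt w x t)^2 / ε := by
        field_simp
        ring
      rw [hkey]
      positivity
    rwa [intervalIntegral.integral_const_mul, intervalIntegral.integral_add ic id',
      intervalIntegral.integral_const_mul, intervalIntegral.integral_const_mul] at h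
  -- final assembly
  rw [hRsplit, henergy]
  exact SB.final_arith hα hlm hδ hρ₃ hε hcβ hNμ hNγ hNκ hε1 hε2 nA1 nA2 nA3 nA4 nA5 nA6
    nA7 nA8 nB1 nD hPψ hPwt hE2 hYoung
end
end

section
/- Let (u, φ, ψ, w) be a classical solution of the suspension-bridge Shear beam system in thermoelasticity of type III, and let c_p > 0 be a Poincaré constant for (0,L). Then the energy decays exponentially: there exist positive constants σ₀ and σ₁ such that E(t) ≤ σ₀ e^{−σ₁ t} for all t ≥ 0, where σ₁ depends only on the constitutive constants, L and c_p, and σ₀ is proportional to E(0). -/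
open MeasureTheory Set

noncomputable section

set_option maxHeartbeats 1000000

namespace Shear

abbrev unc (f : ℝ → ℝ → ℝ) : ℝ × ℝ → ℝ := fun p => f p.1 p.2

lemma hasDerivAt_t {f : ℝ → ℝ → ℝ} (hf : ContDiff ℝ 1 (unc f)) (x t : ℝ) :
    HasDerivAt (fun s => f x s) (pdt f x t) t :=
  ((hf.differentiable one_ne_zero (x, t)).comp t
    ((differentiableAt_const x).prodMk differentiableAt_id)).hasDerivAt

lemma hasDerivAt_x {f : ℝ → ℝ → ℝ} (hf : ContDiff ℝ 1 (unc f)) (x t : ℝ) :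
    HasDerivAt (fun y => f y t) (pdx f x t) x :=
  ((hf.differentiable one_ne_zero (x, t)).comp (f := fun y : ℝ => ((y, t) : ℝ × ℝ)) x
    (differentiableAt_id.prodMk (differentiableAt_const t))).hasDerivAt

lemma pdt_eq_fderiv {f : ℝ → ℝ → ℝ} (hf : ContDiff ℝ 1 (unc f)) (x t : ℝ) :
    pdt f x t = fderiv ℝ (unc f) (x, t) (0, 1) := by
  have hF : HasFDerivAt (unc f) (fderiv ℝ (unc f) (x, t)) (x, t) :=
    (hf.differentiable one_ne_zero (x, t)).hasFDerivAt
  have hc : HasDerivAt (fun s : ℝ => ((x, s) : ℝ × ℝ)) (0, 1) t := by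
    simpa using (HasDerivAt.prodMk (hasDerivAt_const t x) (hasDerivAt_id t))
  exact (hF.comp_hasDerivAt t hc).deriv

lemma pdx_eq_fderiv {f : ℝ → ℝ → ℝ} (hf : ContDiff ℝ 1 (unc f)) (x t : ℝ) :
    pdx f x t = fderiv ℝ (unc f) (x, t) (1, 0) := by
  have hF : HasFDerivAt (unc f) (fderiv ℝ (unc f) (x, t)) (x, t) :=
    (hf.differentiable one_ne_zero (x, t)).hasFDerivAt
  have hc : HasDerivAt (fun y : ℝ => ((y, t) : ℝ × ℝ)) (1, 0) x := by
    simpa using (HasDerivAt.prodMk (hasDerivAt_id x) (hasDerivAt_const x t))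
  exact (hF.comp_hasDerivAt x hc).deriv

lemma contDiff_pdt {f : ℝ → ℝ → ℝ} {n m : ℕ} (hf : ContDiff ℝ n (unc f))
    (hmn : m + 1 ≤ n) : ContDiff ℝ m (unc (pdt f)) := by
  have h : ContDiff ℝ m (fderiv ℝ (unc f)) := by
    apply hf.fderiv_right; exact_mod_cast hmn
  have h2 : ContDiff ℝ m (fun p : ℝ × ℝ => fderiv ℝ (unc f) p (0, 1)) :=
    h.clm_apply contDiff_const
  have hf1 : ContDiff ℝ 1 (unc f) := hf.of_le (by exact_mod_cast le_trans (by simp) hmn)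
  have he : unc (pdt f) = fun p : ℝ × ℝ => fderiv ℝ (unc f) p (0, 1) := by
    funext p; exact pdt_eq_fderiv hf1 p.1 p.2
  rw [he]; exact h2

lemma contDiff_pdx {f : ℝ → ℝ → ℝ} {n m : ℕ} (hf : ContDiff ℝ n (unc f))
    (hmn : m + 1 ≤ n) : ContDiff ℝ m (unc (pdx f)) := by
  have h : ContDiff ℝ m (fderiv ℝ (unc f)) := by
    apply hf.fderiv_right; exact_mod_cast hmn
  have h2 : ContDiff ℝ m (fun p : ℝ × ℝ => fderiv ℝ (unc f) p (1, 0)) :=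
    h.clm_apply contDiff_const
  have hf1 : ContDiff ℝ 1 (unc f) := hf.of_le (by exact_mod_cast le_trans (by simp) hmn)
  have he : unc (pdx f) = fun p : ℝ × ℝ => fderiv ℝ (unc f) p (1, 0) := by
    funext p; exact pdx_eq_fderiv hf1 p.1 p.2
  rw [he]; exact h2

/-- Clairaut's theorem for our setting. -/
lemma pdx_pdt_comm {f : ℝ → ℝ → ℝ} {n : ℕ} (hf : ContDiff ℝ n (unc f)) (hn : 2 ≤ n)
    (x t : ℝ) : pdx (pdt f) x t = pdt (pdx f) x t := by
  have hf2 : ContDiff ℝ 2 (unc f) := hf.of_le (by exact_mod_cast hn)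
  have hf1 : ContDiff ℝ 1 (unc f) := hf2.of_le (by norm_num)
  set g := fderiv ℝ (unc f) with hg
  have hgd : ContDiff ℝ 1 g := hf2.fderiv_right (by norm_num)
  have hgf : HasFDerivAt g (fderiv ℝ g (x, t)) (x, t) :=
    (hgd.differentiable one_ne_zero (x, t)).hasFDerivAt
  set g' := fderiv ℝ g (x, t) with hg'
  have hsymm : ∀ v w : ℝ × ℝ, g' v w = g' w v := by
    intro v w
    apply second_derivative_symmetric_of_eventually_of_real
      (Filter.Eventually.of_forall fun y => (hf1.differentiable one_ne_zero y).hasFDerivAt) hgf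
  have h1 : pdx (pdt f) x t = g' (1, 0) (0, 1) := by
    unfold pdx
    have hline : HasDerivAt (fun y : ℝ => ((y, t) : ℝ × ℝ)) (1, 0) x := by
      simpa using (HasDerivAt.prodMk (hasDerivAt_id x) (hasDerivAt_const x t))
    have hcomp : HasDerivAt (fun y : ℝ => g (y, t)) (g' (1, 0)) x :=
      hgf.comp_hasDerivAt x hline
    have happ : HasDerivAt (fun y : ℝ => g (y, t) (0, 1)) (g' (1, 0) (0, 1)) x := by
      have := (ContinuousLinearMap.apply ℝ ℝ ((0:ℝ), (1:ℝ))).hasFDerivAt.comp_hasDerivAt x hcomp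
      exact this
    have he : (fun y : ℝ => pdt f y t) = fun y : ℝ => g (y, t) (0, 1) := by
      funext y; exact pdt_eq_fderiv hf1 y t
    rw [he]
    exact happ.deriv
  have h2 : pdt (pdx f) x t = g' (0, 1) (1, 0) := by
    unfold pdt
    have hline : HasDerivAt (fun s : ℝ => ((x, s) : ℝ × ℝ)) (0, 1) t := by
      simpa using (HasDerivAt.prodMk (hasDerivAt_const t x) (hasDerivAt_id t))
    have hcomp : HasDerivAt (fun s : ℝ => g (x, s)) (g' (0, 1)) t :=
      hgf.comp_hasDerivAt t hline
    have happ : HasDerivAt (fun s : ℝ => g (x, s) (1, 0)) (g' (0, 1) (1, 0)) t := by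
      have := (ContinuousLinearMap.apply ℝ ℝ ((1:ℝ), (0:ℝ))).hasFDerivAt.comp_hasDerivAt t hcomp
      exact this
    have he : (fun s : ℝ => pdx f x s) = fun s : ℝ => g (x, s) (1, 0) := by
      funext s; exact pdx_eq_fderiv hf1 x s
    rw [he]
    exact happ.deriv
  rw [h1, h2, hsymm]

/-- Differentiation under the interval integral. -/
lemma hasDerivAt_intInt {G Gt : ℝ → ℝ → ℝ} {L : ℝ}
    (hG : Continuous (unc G)) (hGt : Continuous (unc Gt))
    (hd : ∀ x t, HasDerivAt (fun s => G x s) (Gt x t) t) (t₀ : ℝ) :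
    HasDerivAt (fun t => ∫ x in (0:ℝ)..L, G x t) (∫ x in (0:ℝ)..L, Gt x t₀) t₀ := by
  obtain ⟨M, hM⟩ : ∃ M, ∀ p ∈ (uIcc (0:ℝ) L) ×ˢ (Icc (t₀ - 1) (t₀ + 1)), |unc Gt p| ≤ M := by
    have hcpt : IsCompact ((uIcc (0:ℝ) L) ×ˢ (Icc (t₀ - 1) (t₀ + 1))) :=
      isCompact_uIcc.prod isCompact_Icc
    obtain ⟨M, hM⟩ := hcpt.exists_bound_of_continuousOn (hGt.continuousOn.norm)
    exact ⟨M, fun p hp => by simpa using hM p hp⟩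
  have key := intervalIntegral.hasDerivAt_integral_of_dominated_loc_of_deriv_le
    (F := fun t x => G x t) (F' := fun t x => Gt x t) (x₀ := t₀) (a := 0) (b := L)
    (bound := fun _ => M) (μ := volume) (s := Metric.ball t₀ 1) (Metric.ball_mem_nhds t₀ one_pos)
    (Filter.Eventually.of_forall fun t =>
      (hG.comp (continuous_id.prodMk continuous_const)).aestronglyMeasurable)
    ((hG.comp (continuous_id.prodMk continuous_const)).intervalIntegrable 0 L)
    (hGt.comp (continuous_id.prodMk continuous_const)).aestronglyMeasurable
    ?_ intervalIntegrable_const ?_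
  · exact key.2
  · refine Filter.Eventually.of_forall fun x hx => fun t ht => ?_
    apply hM (x, t)
    refine ⟨uIoc_subset_uIcc hx, ?_⟩
    have : |t - t₀| < 1 := by simpa [Metric.mem_ball, Real.dist_eq] using ht
    constructor <;> [linarith [neg_abs_le (t - t₀)]; linarith [le_abs_self (t - t₀)]]
  · exact Filter.Eventually.of_forall fun x _ => fun t _ => hd x t

/-- Equality on the open interval plus continuity gives equality on the closed interval. -/
lemma eqOn_Icc_of_Ioo {f g : ℝ → ℝ} {L : ℝ} (hL : 0 < L) (hf : Continuous f)
    (hg : Continuous g) (h : ∀ x ∈ Ioo (0:ℝ) L, f x = g x) : ∀ x ∈ Icc (0:ℝ) L, f x = g x := by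
  have h1 : EqOn f g (Ioo (0:ℝ) L) := h
  have h2 : EqOn f g (closure (Ioo (0:ℝ) L)) := h1.closure hf hg
  rw [closure_Ioo hL.ne] at h2
  exact h2

/-- All smoothness facts needed about one C³ function. -/
structure Pack (f : ℝ → ℝ → ℝ) : Prop where
  c1 : ContDiff ℝ 1 (unc f)
  t2 : ContDiff ℝ 2 (unc (pdt f))
  x2 : ContDiff ℝ 2 (unc (pdx f))
  tt1 : ContDiff ℝ 1 (unc (pdt (pdt f)))
  xt1 : ContDiff ℝ 1 (unc (pdx (pdt f)))
  xx1 : ContDiff ℝ 1 (unc (pdx (pdx f)))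
  xxt0 : Continuous (unc (pdx (pdx (pdt f))))
  comm : pdt (pdx f) = pdx (pdt f)

lemma mkPack {f : ℝ → ℝ → ℝ} (hf : ContDiff ℝ 3 (unc f)) : Pack f := by
  have h3 : ContDiff ℝ (3 : ℕ) (unc f) := by exact_mod_cast hf
  have t2 : ContDiff ℝ 2 (unc (pdt f)) := contDiff_pdt h3 (by norm_num)
  have x2 : ContDiff ℝ 2 (unc (pdx f)) := contDiff_pdx h3 (by norm_num)
  have xt2 : ContDiff ℝ 1 (unc (pdx (pdt f))) := contDiff_pdx t2 (by norm_num)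
  refine ⟨h3.of_le (by norm_num), t2, x2, contDiff_pdt t2 (by norm_num), xt2,
    contDiff_pdx x2 (by norm_num), (contDiff_pdx xt2 (le_refl 1) : ContDiff ℝ 0 _).continuous, ?_⟩
  funext x t
  exact (pdx_pdt_comm h3 (by norm_num) x t).symm

/-- derivative of a function vanishing on [0,∞), at t>0. -/
lemma deriv_zero_of_zero_on_nonneg {h : ℝ → ℝ} {t : ℝ} (ht : 0 < t)
    (h0 : ∀ s : ℝ, 0 ≤ s → h s = 0) : deriv h t = 0 := by
  have heq : h =ᶠ[nhds t] (fun _ => 0) := by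
    filter_upwards [Ioi_mem_nhds ht] with s hs
    exact h0 s (le_of_lt hs)
  rw [heq.deriv_eq, deriv_const]

lemma cont_sect {f : ℝ → ℝ → ℝ} (hf : Continuous (unc f)) (t : ℝ) :
    Continuous (fun x => f x t) := hf.comp (continuous_id.prodMk continuous_const)

lemma contDiff_sect {f : ℝ → ℝ → ℝ} (hf : ContDiff ℝ 1 (unc f)) (t : ℝ) :
    ContDiff ℝ 1 (fun x => f x t) := hf.comp (contDiff_id.prodMk contDiff_const)

/-- pdx of a sum. -/
lemma pdx_add {f g : ℝ → ℝ → ℝ} (hf : ContDiff ℝ 1 (unc f)) (hg : ContDiff ℝ 1 (unc g))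
    (x t : ℝ) : pdx (fun y s => f y s + g y s) x t = pdx f x t + pdx g x t := by
  unfold pdx
  have h1 : DifferentiableAt ℝ (fun y => f y t) x := ((hf.differentiable one_ne_zero (x, t)).comp (f := fun y : ℝ => ((y, t) : ℝ × ℝ)) x
      (differentiableAt_id.prodMk (differentiableAt_const t)))
  have h2 : DifferentiableAt ℝ (fun y => g y t) x := ((hg.differentiable one_ne_zero (x, t)).comp (f := fun y : ℝ => ((y, t) : ℝ × ℝ)) x
      (differentiableAt_id.prodMk (differentiableAt_const t)))
  exact deriv_add h1 h2

def intsq (L : ℝ) (f : ℝ → ℝ → ℝ) (t : ℝ) : ℝ := ∫ x in (0:ℝ)..L, (f x t)^2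

lemma intsq_nonneg {L : ℝ} (hL : 0 ≤ L) (f : ℝ → ℝ → ℝ) (t : ℝ) : 0 ≤ intsq L f t :=
  intervalIntegral.integral_nonneg hL (fun x _ => sq_nonneg _)

end Shear

namespace Shear

variable {L ρ α lm μ ρ₁ K γ b ρ₃ δ κ β : ℝ} {u φ ψ w : ℝ → ℝ → ℝ}

section Main

variable (hS : IsShearSolution L ρ α lm μ ρ₁ K γ b ρ₃ δ κ β u φ ψ w)

/-- The t-derivative of the energy integrand. -/
def EGt (ρ α lm ρ₁ K b ρ₃ δ : ℝ) (u φ ψ w : ℝ → ℝ → ℝ) (x t : ℝ) : ℝ :=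
  2*(ρ * (pdt u x t * pdt (pdt u) x t) + α * (pdx u x t * pdx (pdt u) x t)
   + lm * ((φ x t - u x t) * (pdt φ x t - pdt u x t))
   + ρ₁ * (pdt φ x t * pdt (pdt φ) x t)
   + K * ((pdx φ x t + ψ x t) * (pdx (pdt φ) x t + pdt ψ x t))
   + b * (pdx ψ x t * pdx (pdt ψ) x t)
   + ρ₃ * (pdt w x t * pdt (pdt w) x t) + δ * (pdx w x t * pdx (pdt w) x t))

/-- Auxiliary functional integrand and its t-derivative. -/
def PG (ρ ρ₁ ρ₃ μ γ : ℝ) (u φ w : ℝ → ℝ → ℝ) (x t : ℝ) : ℝ :=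
  ρ * (u x t * pdt u x t) + ρ₁ * (φ x t * pdt φ x t) + ρ₃ * (w x t * pdt w x t)
  + μ/2 * (u x t)^2 + γ/2 * (φ x t)^2

def PGt (ρ ρ₁ ρ₃ μ γ : ℝ) (u φ w : ℝ → ℝ → ℝ) (x t : ℝ) : ℝ :=
  ρ * (pdt u x t)^2 + ρ * (u x t * pdt (pdt u) x t)
  + ρ₁ * (pdt φ x t)^2 + ρ₁ * (φ x t * pdt (pdt φ) x t)
  + ρ₃ * (pdt w x t)^2 + ρ₃ * (w x t * pdt (pdt w) x t)
  + μ * (u x t * pdt u x t) + γ * (φ x t * pdt φ x t)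

include hS

lemma energy_hasDerivAt (t₀ : ℝ) :
    HasDerivAt (energy L ρ α lm ρ₁ K b ρ₃ δ u φ ψ w)
      ((1/2) * ∫ x in (0:ℝ)..L, EGt ρ α lm ρ₁ K b ρ₃ δ u φ ψ w x t₀) t₀ := by
  have Pu := mkPack hS.smooth_u
  have Pp := mkPack hS.smooth_phi
  have Ps := mkPack hS.smooth_psi
  have Pw := mkPack hS.smooth_w
  have hG : Continuous (unc (fun x t =>
      ρ * (pdt u x t)^2 + α * (pdx u x t)^2 + lm * (φ x t - u x t)^2
      + ρ₁ * (pdt φ x t)^2 + K * (pdx φ x t + ψ x t)^2 + b * (pdx ψ x t)^2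
      + ρ₃ * (pdt w x t)^2 + δ * (pdx w x t)^2)) := by
    have c1 := Pu.t2.continuous; have c2 := Pu.x2.continuous
    have c3 := Pp.c1.continuous; have c4 := Pu.c1.continuous
    have c5 := Pp.t2.continuous; have c6 := Pp.x2.continuous
    have c7 := Ps.c1.continuous; have c8 := Ps.x2.continuous
    have c9 := Pw.t2.continuous; have c10 := Pw.x2.continuous
    fun_prop
  have hGt : Continuous (unc (EGt ρ α lm ρ₁ K b ρ₃ δ u φ ψ w)) := by
    have c1 := Pu.t2.continuous; have c2 := Pu.x2.continuous
    have c3 := Pp.c1.continuous; have c4 := Pu.c1.continuous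
    have c5 := Pp.t2.continuous; have c6 := Pp.x2.continuous
    have c7 := Ps.c1.continuous; have c8 := Ps.x2.continuous
    have c9 := Pw.t2.continuous; have c10 := Pw.x2.continuous
    have d1 := Pu.tt1.continuous; have d2 := Pu.xt1.continuous
    have d3 := Pp.tt1.continuous; have d4 := Pp.xt1.continuous
    have d5 := Ps.t2.continuous; have d6 := Ps.xt1.continuous
    have d7 := Pw.tt1.continuous; have d8 := Pw.xt1.continuous
    unfold EGt
    fun_prop
  have hd : ∀ x s, HasDerivAt (fun r =>
      ρ * (pdt u x r)^2 + α * (pdx u x r)^2 + lm * (φ x r - u x r)^2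
      + ρ₁ * (pdt φ x r)^2 + K * (pdx φ x r + ψ x r)^2 + b * (pdx ψ x r)^2
      + ρ₃ * (pdt w x r)^2 + δ * (pdx w x r)^2)
      (EGt ρ α lm ρ₁ K b ρ₃ δ u φ ψ w x s) s := by
    intro x s
    have h1 : HasDerivAt (fun r => pdt u x r) (pdt (pdt u) x s) s :=
      hasDerivAt_t (Pu.t2.of_le one_le_two) x s
    have h2 : HasDerivAt (fun r => pdx u x r) (pdt (pdx u) x s) s :=
      hasDerivAt_t (Pu.x2.of_le one_le_two) x s
    have h3 : HasDerivAt (fun r => u x r) (pdt u x s) s := hasDerivAt_t Pu.c1 x s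
    have h4 : HasDerivAt (fun r => pdt φ x r) (pdt (pdt φ) x s) s :=
      hasDerivAt_t (Pp.t2.of_le one_le_two) x s
    have h5 : HasDerivAt (fun r => pdx φ x r) (pdt (pdx φ) x s) s :=
      hasDerivAt_t (Pp.x2.of_le one_le_two) x s
    have h6 : HasDerivAt (fun r => φ x r) (pdt φ x s) s := hasDerivAt_t Pp.c1 x s
    have h7 : HasDerivAt (fun r => pdx ψ x r) (pdt (pdx ψ) x s) s :=
      hasDerivAt_t (Ps.x2.of_le one_le_two) x s
    have h8 : HasDerivAt (fun r => ψ x r) (pdt ψ x s) s := hasDerivAt_t Ps.c1 x s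
    have h9 : HasDerivAt (fun r => pdt w x r) (pdt (pdt w) x s) s :=
      hasDerivAt_t (Pw.t2.of_le one_le_two) x s
    have h10 : HasDerivAt (fun r => pdx w x r) (pdt (pdx w) x s) s :=
      hasDerivAt_t (Pw.x2.of_le one_le_two) x s
    have H := ((((((((h1.pow 2).const_mul ρ).add ((h2.pow 2).const_mul α)).add
      (((h6.sub h3).pow 2).const_mul lm)).add ((h4.pow 2).const_mul ρ₁)).add
      (((h5.add h8).pow 2).const_mul K)).add ((h7.pow 2).const_mul b)).add
      ((h9.pow 2).const_mul ρ₃)).add ((h10.pow 2).const_mul δ)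
    convert H using 1
    · rfl
    · rfl
    · rfl
    unfold EGt
    rw [← Pu.comm, ← Pp.comm, ← Ps.comm, ← Pw.comm]
    simp only [Pi.sub_apply, Pi.add_apply]
    push_cast
    ring
  exact HasDerivAt.const_mul (1/2 : ℝ) (hasDerivAt_intInt (L := L) hG hGt hd t₀)

lemma aux_hasDerivAt (t₀ : ℝ) :
    HasDerivAt (fun t => ∫ x in (0:ℝ)..L, PG ρ ρ₁ ρ₃ μ γ u φ w x t)
      (∫ x in (0:ℝ)..L, PGt ρ ρ₁ ρ₃ μ γ u φ w x t₀) t₀ := by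
  have Pu := mkPack hS.smooth_u
  have Pp := mkPack hS.smooth_phi
  have Pw := mkPack hS.smooth_w
  have hG : Continuous (unc (PG ρ ρ₁ ρ₃ μ γ u φ w)) := by
    have c1 := Pu.t2.continuous; have c3 := Pp.c1.continuous
    have c4 := Pu.c1.continuous; have c5 := Pp.t2.continuous
    have c9 := Pw.t2.continuous; have c11 := Pw.c1.continuous
    unfold PG; fun_prop
  have hGt : Continuous (unc (PGt ρ ρ₁ ρ₃ μ γ u φ w)) := by
    have c1 := Pu.t2.continuous; have c3 := Pp.c1.continuous
    have c4 := Pu.c1.continuous; have c5 := Pp.t2.continuous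
    have c9 := Pw.t2.continuous; have c11 := Pw.c1.continuous
    have d1 := Pu.tt1.continuous; have d3 := Pp.tt1.continuous
    have d7 := Pw.tt1.continuous
    unfold PGt; fun_prop
  have hd : ∀ x s, HasDerivAt (fun r => PG ρ ρ₁ ρ₃ μ γ u φ w x r)
      (PGt ρ ρ₁ ρ₃ μ γ u φ w x s) s := by
    intro x s
    have h1 : HasDerivAt (fun r => pdt u x r) (pdt (pdt u) x s) s :=
      hasDerivAt_t (Pu.t2.of_le one_le_two) x s
    have h3 : HasDerivAt (fun r => u x r) (pdt u x s) s := hasDerivAt_t Pu.c1 x s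
    have h4 : HasDerivAt (fun r => pdt φ x r) (pdt (pdt φ) x s) s :=
      hasDerivAt_t (Pp.t2.of_le one_le_two) x s
    have h6 : HasDerivAt (fun r => φ x r) (pdt φ x s) s := hasDerivAt_t Pp.c1 x s
    have h9 : HasDerivAt (fun r => pdt w x r) (pdt (pdt w) x s) s :=
      hasDerivAt_t (Pw.t2.of_le one_le_two) x s
    have h11 : HasDerivAt (fun r => w x r) (pdt w x s) s := hasDerivAt_t Pw.c1 x s
    have H := (((((h3.mul h1).const_mul ρ).add ((h6.mul h4).const_mul ρ₁)).add
      (((h11.mul h9)).const_mul ρ₃)).add ((h3.pow 2).const_mul (μ/2))).add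
      ((h6.pow 2).const_mul (γ/2))
    convert H using 1
    · rfl
    · rfl
    · rfl
    unfold PGt; push_cast; ring
  exact hasDerivAt_intInt (L := L) hG hGt hd t₀

lemma energy_deriv_value (hL : 0 < L) {t : ℝ} (ht : 0 < t) :
    ∫ x in (0:ℝ)..L, EGt ρ α lm ρ₁ K b ρ₃ δ u φ ψ w x t
      = -2*μ*intsq L (pdt u) t - 2*γ*intsq L (pdt φ) t - 2*κ*intsq L (pdx (pdt w)) t := by
  have Pu := mkPack hS.smooth_u
  have Pp := mkPack hS.smooth_phi
  have Ps := mkPack hS.smooth_psi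
  have Pw := mkPack hS.smooth_w
  -- boundary values of time derivatives
  have pu0 : pdt u 0 t = 0 :=
    deriv_zero_of_zero_on_nonneg ht (fun s hs => (hS.bc s hs).1)
  have puL : pdt u L t = 0 :=
    deriv_zero_of_zero_on_nonneg ht (fun s hs => (hS.bc s hs).2.1)
  have pp0 : pdt φ 0 t = 0 :=
    deriv_zero_of_zero_on_nonneg ht (fun s hs => (hS.bc s hs).2.2.1)
  have ppL : pdt φ L t = 0 :=
    deriv_zero_of_zero_on_nonneg ht (fun s hs => (hS.bc s hs).2.2.2.1)
  have ps0 : pdt ψ 0 t = 0 :=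
    deriv_zero_of_zero_on_nonneg ht (fun s hs => (hS.bc s hs).2.2.2.2.1)
  have psL : pdt ψ L t = 0 :=
    deriv_zero_of_zero_on_nonneg ht (fun s hs => (hS.bc s hs).2.2.2.2.2.1)
  have pw0 : pdt w 0 t = 0 :=
    deriv_zero_of_zero_on_nonneg ht (fun s hs => (hS.bc s hs).2.2.2.2.2.2.1)
  have pwL : pdt w L t = 0 :=
    deriv_zero_of_zero_on_nonneg ht (fun s hs => (hS.bc s hs).2.2.2.2.2.2.2)
  set R : ℝ → ℝ := fun x => -(2*μ)*(pdt u x t)^2 + (-(2*γ)*(pdt φ x t)^2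
      + -(2*κ)*(pdx (pdt w) x t)^2) with hRdef
  set Φ : ℝ → ℝ := fun y => 2*(α * (pdt u y t * pdx u y t)
      + K * (pdt φ y t * (pdx φ y t + ψ y t)) + b * (pdt ψ y t * pdx ψ y t)
      + δ * (pdt w y t * pdx w y t) - β * (pdt φ y t * pdt w y t)
      + κ * (pdt w y t * pdx (pdt w) y t)) with hPhidef
  set Φ' : ℝ → ℝ := fun y => 2*(α * (pdx (pdt u) y t * pdx u y t + pdt u y t * pdx (pdx u) y t)
      + K * (pdx (pdt φ) y t * (pdx φ y t + ψ y t) + pdt φ y t * (pdx (pdx φ) y t + pdx ψ y t))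
      + b * (pdx (pdt ψ) y t * pdx ψ y t + pdt ψ y t * pdx (pdx ψ) y t)
      + δ * (pdx (pdt w) y t * pdx w y t + pdt w y t * pdx (pdx w) y t)
      - β * (pdx (pdt φ) y t * pdt w y t + pdt φ y t * pdx (pdt w) y t)
      + κ * (pdx (pdt w) y t * pdx (pdt w) y t + pdt w y t * pdx (pdx (pdt w)) y t)) with hPhi'def
  -- continuity facts
  have c1 := Pu.t2.continuous; have c2 := Pu.x2.continuous
  have c3 := Pp.c1.continuous; have c4 := Pu.c1.continuous
  have c5 := Pp.t2.continuous; have c6 := Pp.x2.continuous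
  have c7 := Ps.c1.continuous; have c8 := Ps.x2.continuous
  have c9 := Pw.t2.continuous; have c10 := Pw.x2.continuous
  have d1 := Pu.tt1.continuous; have d2 := Pu.xt1.continuous
  have d3 := Pp.tt1.continuous; have d4 := Pp.xt1.continuous
  have d5 := Ps.t2.continuous; have d6 := Ps.xt1.continuous
  have d7 := Pw.tt1.continuous; have d8 := Pw.xt1.continuous
  have d9 := Pu.xx1.continuous; have d10 := Pp.xx1.continuous
  have d11 := Ps.xx1.continuous; have d12 := Pw.xx1.continuous
  have d13 := Pw.xxt0
  have contEGt : Continuous (fun x => EGt ρ α lm ρ₁ K b ρ₃ δ u φ ψ w x t) := by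
    unfold EGt; fun_prop
  have contR : Continuous R := by rw [hRdef]; fun_prop
  have contPhi' : Continuous Φ' := by rw [hPhi'def]; fun_prop
  -- pointwise identity on the closed interval
  have hpt : ∀ x ∈ Icc (0:ℝ) L, EGt ρ α lm ρ₁ K b ρ₃ δ u φ ψ w x t = R x + Φ' x := by
    refine eqOn_Icc_of_Ioo hL contEGt (contR.add contPhi') ?_
    intro x hx
    have e1 := hS.eq1 x hx t ht
    have e2 := hS.eq2 x hx t ht
    have e3 := hS.eq3 x hx t ht
    have e4 := hS.eq4 x hx t ht
    rw [pdx_add (Pp.x2.of_le one_le_two) Ps.c1] at e2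
    show EGt ρ α lm ρ₁ K b ρ₃ δ u φ ψ w x t = R x + Φ' x
    rw [hRdef, hPhi'def]
    unfold EGt
    linear_combination (2*pdt u x t) * e1 + (2*pdt φ x t) * e2 + (2*pdt ψ x t) * e3
      + (2*pdt w x t) * e4
  -- FTC for the boundary term
  have HPhi : ∀ y : ℝ, HasDerivAt Φ (Φ' y) y := by
    intro y
    have h1 := hasDerivAt_x (Pu.t2.of_le one_le_two) y t
    have h2 := hasDerivAt_x (Pu.x2.of_le one_le_two) y t
    have h4 := hasDerivAt_x (Pp.t2.of_le one_le_two) y t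
    have h5 := hasDerivAt_x (Pp.x2.of_le one_le_two) y t
    have h8 := hasDerivAt_x Ps.c1 y t
    have h7 := hasDerivAt_x (Ps.x2.of_le one_le_two) y t
    have h6 := hasDerivAt_x (Ps.t2.of_le one_le_two) y t
    have h9 := hasDerivAt_x (Pw.t2.of_le one_le_two) y t
    have h10 := hasDerivAt_x (Pw.x2.of_le one_le_two) y t
    have h11 := hasDerivAt_x Pw.xt1 y t
    have H := (((((((h1.mul h2).const_mul α).add
      (((h4.mul (h5.add h8))).const_mul K)).add ((h6.mul h7).const_mul b)).add
      ((h9.mul h10).const_mul δ)).sub ((h4.mul h9).const_mul β)).add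
      ((h9.mul h11).const_mul κ)).const_mul 2
    convert H using 1
    all_goals rfl
  have hftc : (∫ x in (0:ℝ)..L, Φ' x) = Φ L - Φ 0 :=
    intervalIntegral.integral_eq_sub_of_hasDerivAt (fun y _ => HPhi y)
      (contPhi'.intervalIntegrable 0 L)
  have hbd : Φ L - Φ 0 = 0 := by
    rw [hPhidef]
    simp only [pu0, puL, pp0, ppL, ps0, psL, pw0, pwL]
    ring
  have hsplit : (∫ x in (0:ℝ)..L, R x)
      = -2*μ*intsq L (pdt u) t - 2*γ*intsq L (pdt φ) t - 2*κ*intsq L (pdx (pdt w)) t := by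
    rw [hRdef]
    unfold intsq
    have i1 : IntervalIntegrable (fun x => -(2*μ)*(pdt u x t)^2) volume 0 L :=
      (Continuous.intervalIntegrable (by fun_prop) 0 L)
    have i2 : IntervalIntegrable (fun x => -(2*γ)*(pdt φ x t)^2) volume 0 L :=
      (Continuous.intervalIntegrable (by fun_prop) 0 L)
    have i3 : IntervalIntegrable (fun x => -(2*κ)*(pdx (pdt w) x t)^2) volume 0 L :=
      (Continuous.intervalIntegrable (by fun_prop) 0 L)
    rw [intervalIntegral.integral_add i1 (i2.add i3), intervalIntegral.integral_add i2 i3,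
      intervalIntegral.integral_const_mul, intervalIntegral.integral_const_mul,
      intervalIntegral.integral_const_mul]
    ring
  calc ∫ x in (0:ℝ)..L, EGt ρ α lm ρ₁ K b ρ₃ δ u φ ψ w x t
      = ∫ x in (0:ℝ)..L, (R x + Φ' x) := by
        apply intervalIntegral.integral_congr
        rw [uIcc_of_le hL.le]
        exact hpt
    _ = (∫ x in (0:ℝ)..L, R x) + ∫ x in (0:ℝ)..L, Φ' x := by
        exact intervalIntegral.integral_add (contR.intervalIntegrable 0 L)
          (contPhi'.intervalIntegrable 0 L)
    _ = -2*μ*intsq L (pdt u) t - 2*γ*intsq L (pdt φ) t - 2*κ*intsq L (pdx (pdt w)) t := by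
        rw [hftc, hbd, hsplit]; ring

lemma aux_deriv_value (hL : 0 < L) {t : ℝ} (ht : 0 < t) :
    ∫ x in (0:ℝ)..L, PGt ρ ρ₁ ρ₃ μ γ u φ w x t
      = ρ*intsq L (pdt u) t + ρ₁*intsq L (pdt φ) t + ρ₃*intsq L (pdt w) t
        - α*intsq L (pdx u) t - lm*intsq L (fun x s => φ x s - u x s) t
        - K*intsq L (fun x s => pdx φ x s + ψ x s) t - b*intsq L (pdx ψ) t
        - δ*intsq L (pdx w) t
        + ∫ x in (0:ℝ)..L, (-(κ * (pdx w x t * pdx (pdt w) x t))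
            + β * (pdx w x t * pdt φ x t) + β * (pdx φ x t * pdt w x t)) := by
  have Pu := mkPack hS.smooth_u
  have Pp := mkPack hS.smooth_phi
  have Ps := mkPack hS.smooth_psi
  have Pw := mkPack hS.smooth_w
  obtain ⟨bu0, buL, bp0, bpL, bs0, bsL, bw0, bwL⟩ := hS.bc t ht.le
  set Xp : ℝ → ℝ := fun x => -(κ * (pdx w x t * pdx (pdt w) x t))
      + β * (pdx w x t * pdt φ x t) + β * (pdx φ x t * pdt w x t) with hXpdef
  set R2 : ℝ → ℝ := fun x => ρ*(pdt u x t)^2 + (ρ₁*(pdt φ x t)^2 + (ρ₃*(pdt w x t)^2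
      + (-α*(pdx u x t)^2 + (-lm*(φ x t - u x t)^2 + (-K*(pdx φ x t + ψ x t)^2
      + (-b*(pdx ψ x t)^2 + (-δ*(pdx w x t)^2 + Xp x))))))) with hR2def
  set Ψ : ℝ → ℝ := fun y => α * (u y t * pdx u y t) + K * (φ y t * (pdx φ y t + ψ y t))
      + b * (ψ y t * pdx ψ y t) + δ * (w y t * pdx w y t) + κ * (w y t * pdx (pdt w) y t)
      - β * (w y t * pdt φ y t) - β * (φ y t * pdt w y t) with hPsidef
  set Ψ' : ℝ → ℝ := fun y =>
      α * (pdx u y t * pdx u y t + u y t * pdx (pdx u) y t)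
      + K * (pdx φ y t * (pdx φ y t + ψ y t) + φ y t * (pdx (pdx φ) y t + pdx ψ y t))
      + b * (pdx ψ y t * pdx ψ y t + ψ y t * pdx (pdx ψ) y t)
      + δ * (pdx w y t * pdx w y t + w y t * pdx (pdx w) y t)
      + κ * (pdx w y t * pdx (pdt w) y t + w y t * pdx (pdx (pdt w)) y t)
      - β * (pdx w y t * pdt φ y t + w y t * pdx (pdt φ) y t)
      - β * (pdx φ y t * pdt w y t + φ y t * pdx (pdt w) y t) with hPsi'def
  have c1 := Pu.t2.continuous; have c2 := Pu.x2.continuous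
  have c3 := Pp.c1.continuous; have c4 := Pu.c1.continuous
  have c5 := Pp.t2.continuous; have c6 := Pp.x2.continuous
  have c7 := Ps.c1.continuous; have c8 := Ps.x2.continuous
  have c9 := Pw.t2.continuous; have c10 := Pw.x2.continuous
  have c11 := Pw.c1.continuous
  have d1 := Pu.tt1.continuous; have d2 := Pu.xt1.continuous
  have d3 := Pp.tt1.continuous; have d4 := Pp.xt1.continuous
  have d5 := Ps.t2.continuous; have d6 := Ps.xt1.continuous
  have d7 := Pw.tt1.continuous; have d8 := Pw.xt1.continuous
  have d9 := Pu.xx1.continuous; have d10 := Pp.xx1.continuous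
  have d11 := Ps.xx1.continuous; have d12 := Pw.xx1.continuous
  have d13 := Pw.xxt0
  have contPGt : Continuous (fun x => PGt ρ ρ₁ ρ₃ μ γ u φ w x t) := by
    unfold PGt; fun_prop
  have contXp : Continuous Xp := by rw [hXpdef]; fun_prop
  have contR2 : Continuous R2 := by rw [hR2def]; fun_prop
  have contPsi' : Continuous Ψ' := by rw [hPsi'def]; fun_prop
  have hpt : ∀ x ∈ Icc (0:ℝ) L, PGt ρ ρ₁ ρ₃ μ γ u φ w x t = R2 x + Ψ' x := by
    refine eqOn_Icc_of_Ioo hL contPGt (contR2.add contPsi') ?_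
    intro x hx
    have e1 := hS.eq1 x hx t ht
    have e2 := hS.eq2 x hx t ht
    have e3 := hS.eq3 x hx t ht
    have e4 := hS.eq4 x hx t ht
    rw [pdx_add (Pp.x2.of_le one_le_two) Ps.c1] at e2
    show PGt ρ ρ₁ ρ₃ μ γ u φ w x t = R2 x + Ψ' x
    rw [hR2def, hPsi'def, hXpdef]
    unfold PGt
    linear_combination (u x t) * e1 + (φ x t) * e2 + (ψ x t) * e3 + (w x t) * e4
  have HPsi : ∀ y : ℝ, HasDerivAt Ψ (Ψ' y) y := by
    intro y
    have hu := hasDerivAt_x Pu.c1 y t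
    have hux := hasDerivAt_x (Pu.x2.of_le one_le_two) y t
    have hph := hasDerivAt_x Pp.c1 y t
    have hpx := hasDerivAt_x (Pp.x2.of_le one_le_two) y t
    have hps := hasDerivAt_x Ps.c1 y t
    have hpsx := hasDerivAt_x (Ps.x2.of_le one_le_two) y t
    have hw := hasDerivAt_x Pw.c1 y t
    have hwx := hasDerivAt_x (Pw.x2.of_le one_le_two) y t
    have hwxt := hasDerivAt_x Pw.xt1 y t
    have hpt' := hasDerivAt_x (Pp.t2.of_le one_le_two) y t
    have hwt' := hasDerivAt_x (Pw.t2.of_le one_le_two) y t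
    have H := (((((((hu.mul hux).const_mul α).add
      ((hph.mul (hpx.add hps)).const_mul K)).add ((hps.mul hpsx).const_mul b)).add
      ((hw.mul hwx).const_mul δ)).add ((hw.mul hwxt).const_mul κ)).sub
      ((hw.mul hpt').const_mul β)).sub ((hph.mul hwt').const_mul β)
    convert H using 1
    all_goals rfl
  have hftc : (∫ x in (0:ℝ)..L, Ψ' x) = Ψ L - Ψ 0 :=
    intervalIntegral.integral_eq_sub_of_hasDerivAt (fun y _ => HPsi y)
      (contPsi'.intervalIntegrable 0 L)
  have hbd : Ψ L - Ψ 0 = 0 := by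
    rw [hPsidef]
    simp only [bu0, buL, bp0, bpL, bs0, bsL, bw0, bwL]
    ring
  have hsplit : (∫ x in (0:ℝ)..L, R2 x)
      = ρ*intsq L (pdt u) t + ρ₁*intsq L (pdt φ) t + ρ₃*intsq L (pdt w) t
        - α*intsq L (pdx u) t - lm*intsq L (fun x s => φ x s - u x s) t
        - K*intsq L (fun x s => pdx φ x s + ψ x s) t - b*intsq L (pdx ψ) t
        - δ*intsq L (pdx w) t + ∫ x in (0:ℝ)..L, Xp x := by
    rw [hR2def]
    unfold intsq
    have i1 : IntervalIntegrable (fun x => ρ*(pdt u x t)^2) volume 0 L :=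
      (Continuous.intervalIntegrable (by fun_prop) 0 L)
    have i2 : IntervalIntegrable (fun x => ρ₁*(pdt φ x t)^2) volume 0 L :=
      (Continuous.intervalIntegrable (by fun_prop) 0 L)
    have i3 : IntervalIntegrable (fun x => ρ₃*(pdt w x t)^2) volume 0 L :=
      (Continuous.intervalIntegrable (by fun_prop) 0 L)
    have i4 : IntervalIntegrable (fun x => -α*(pdx u x t)^2) volume 0 L :=
      (Continuous.intervalIntegrable (by fun_prop) 0 L)
    have i5 : IntervalIntegrable (fun x => -lm*(φ x t - u x t)^2) volume 0 L :=
      (Continuous.intervalIntegrable (by fun_prop) 0 L)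
    have i6 : IntervalIntegrable (fun x => -K*(pdx φ x t + ψ x t)^2) volume 0 L :=
      (Continuous.intervalIntegrable (by fun_prop) 0 L)
    have i7 : IntervalIntegrable (fun x => -b*(pdx ψ x t)^2) volume 0 L :=
      (Continuous.intervalIntegrable (by fun_prop) 0 L)
    have i8 : IntervalIntegrable (fun x => -δ*(pdx w x t)^2) volume 0 L :=
      (Continuous.intervalIntegrable (by fun_prop) 0 L)
    have i9 : IntervalIntegrable Xp volume 0 L := contXp.intervalIntegrable 0 L
    rw [intervalIntegral.integral_add i1 (i2.add (i3.add (i4.add (i5.add (i6.add (i7.add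
        (i8.add i9))))))),
      intervalIntegral.integral_add i2 (i3.add (i4.add (i5.add (i6.add (i7.add (i8.add i9)))))),
      intervalIntegral.integral_add i3 (i4.add (i5.add (i6.add (i7.add (i8.add i9))))),
      intervalIntegral.integral_add i4 (i5.add (i6.add (i7.add (i8.add i9)))),
      intervalIntegral.integral_add i5 (i6.add (i7.add (i8.add i9))),
      intervalIntegral.integral_add i6 (i7.add (i8.add i9)),
      intervalIntegral.integral_add i7 (i8.add i9),
      intervalIntegral.integral_add i8 i9,
      intervalIntegral.integral_const_mul, intervalIntegral.integral_const_mul,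
      intervalIntegral.integral_const_mul, intervalIntegral.integral_const_mul,
      intervalIntegral.integral_const_mul, intervalIntegral.integral_const_mul,
      intervalIntegral.integral_const_mul, intervalIntegral.integral_const_mul]
    ring
  calc ∫ x in (0:ℝ)..L, PGt ρ ρ₁ ρ₃ μ γ u φ w x t
      = ∫ x in (0:ℝ)..L, (R2 x + Ψ' x) := by
        apply intervalIntegral.integral_congr
        rw [uIcc_of_le hL.le]
        exact hpt
    _ = (∫ x in (0:ℝ)..L, R2 x) + ∫ x in (0:ℝ)..L, Ψ' x := by
        exact intervalIntegral.integral_add (contR2.intervalIntegrable 0 L)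
          (contPsi'.intervalIntegrable 0 L)
    _ = _ := by
        rw [hftc, hbd, hsplit]
        rw [hXpdef]
        ring

omit hS in
lemma poincare' {c_p : ℝ}
    (hpoin : ∀ f : ℝ → ℝ, ContDiff ℝ 1 f → f 0 = 0 → f L = 0 →
      (∫ x in (0:ℝ)..L, (f x)^2) ≤ c_p * ∫ x in (0:ℝ)..L, (deriv f x)^2)
    {f : ℝ → ℝ → ℝ} (hf : ContDiff ℝ 1 (unc f)) {t : ℝ} (h0 : f 0 t = 0)
    (hLv : f L t = 0) : intsq L f t ≤ c_p * intsq L (pdx f) t :=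
  hpoin (fun x => f x t) (contDiff_sect hf t) h0 hLv

omit hS in
/-- Split an interval integral of eight weighted squares. -/
lemma split8sq {c1 c2 c3 c4 c5 c6 c7 c8 : ℝ} {f1 f2 f3 f4 f5 f6 f7 f8 : ℝ → ℝ}
    (h1 : Continuous f1) (h2 : Continuous f2) (h3 : Continuous f3) (h4 : Continuous f4)
    (h5 : Continuous f5) (h6 : Continuous f6) (h7 : Continuous f7) (h8 : Continuous f8) :
    ∫ x in (0:ℝ)..L, (c1*(f1 x)^2 + c2*(f2 x)^2 + c3*(f3 x)^2 + c4*(f4 x)^2 + c5*(f5 x)^2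
        + c6*(f6 x)^2 + c7*(f7 x)^2 + c8*(f8 x)^2)
      = c1*(∫ x in (0:ℝ)..L, (f1 x)^2) + c2*(∫ x in (0:ℝ)..L, (f2 x)^2)
        + c3*(∫ x in (0:ℝ)..L, (f3 x)^2) + c4*(∫ x in (0:ℝ)..L, (f4 x)^2)
        + c5*(∫ x in (0:ℝ)..L, (f5 x)^2) + c6*(∫ x in (0:ℝ)..L, (f6 x)^2)
        + c7*(∫ x in (0:ℝ)..L, (f7 x)^2) + c8*(∫ x in (0:ℝ)..L, (f8 x)^2) := by
  have i1 : IntervalIntegrable (fun x => c1*(f1 x)^2) volume 0 L :=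
    (Continuous.intervalIntegrable (by fun_prop) 0 L)
  have i2 : IntervalIntegrable (fun x => c2*(f2 x)^2) volume 0 L :=
    (Continuous.intervalIntegrable (by fun_prop) 0 L)
  have i3 : IntervalIntegrable (fun x => c3*(f3 x)^2) volume 0 L :=
    (Continuous.intervalIntegrable (by fun_prop) 0 L)
  have i4 : IntervalIntegrable (fun x => c4*(f4 x)^2) volume 0 L :=
    (Continuous.intervalIntegrable (by fun_prop) 0 L)
  have i5 : IntervalIntegrable (fun x => c5*(f5 x)^2) volume 0 L :=
    (Continuous.intervalIntegrable (by fun_prop) 0 L)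
  have i6 : IntervalIntegrable (fun x => c6*(f6 x)^2) volume 0 L :=
    (Continuous.intervalIntegrable (by fun_prop) 0 L)
  have i7 : IntervalIntegrable (fun x => c7*(f7 x)^2) volume 0 L :=
    (Continuous.intervalIntegrable (by fun_prop) 0 L)
  have i8 : IntervalIntegrable (fun x => c8*(f8 x)^2) volume 0 L :=
    (Continuous.intervalIntegrable (by fun_prop) 0 L)
  rw [intervalIntegral.integral_add ((((((i1.add i2).add i3).add i4).add i5).add i6).add i7) i8,
    intervalIntegral.integral_add (((((i1.add i2).add i3).add i4).add i5).add i6) i7,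
    intervalIntegral.integral_add ((((i1.add i2).add i3).add i4).add i5) i6,
    intervalIntegral.integral_add (((i1.add i2).add i3).add i4) i5,
    intervalIntegral.integral_add ((i1.add i2).add i3) i4,
    intervalIntegral.integral_add (i1.add i2) i3,
    intervalIntegral.integral_add i1 i2,
    intervalIntegral.integral_const_mul, intervalIntegral.integral_const_mul,
    intervalIntegral.integral_const_mul, intervalIntegral.integral_const_mul,
    intervalIntegral.integral_const_mul, intervalIntegral.integral_const_mul,
    intervalIntegral.integral_const_mul, intervalIntegral.integral_const_mul]

include hS in
/-- The energy splits into its eight components. -/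
lemma energy_split (hL : 0 < L) (t : ℝ) :
    energy L ρ α lm ρ₁ K b ρ₃ δ u φ ψ w t
      = (1/2)*(ρ*intsq L (pdt u) t + α*intsq L (pdx u) t
        + lm*intsq L (fun x s => φ x s - u x s) t + ρ₁*intsq L (pdt φ) t
        + K*intsq L (fun x s => pdx φ x s + ψ x s) t + b*intsq L (pdx ψ) t
        + ρ₃*intsq L (pdt w) t + δ*intsq L (pdx w) t) := by
  have Pu := mkPack hS.smooth_u
  have Pp := mkPack hS.smooth_phi
  have Ps := mkPack hS.smooth_psi
  have Pw := mkPack hS.smooth_w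
  have c1 := Pu.t2.continuous; have c2 := Pu.x2.continuous
  have c3 := Pp.c1.continuous; have c4 := Pu.c1.continuous
  have c5 := Pp.t2.continuous; have c6 := Pp.x2.continuous
  have c7 := Ps.c1.continuous; have c8 := Ps.x2.continuous
  have c9 := Pw.t2.continuous; have c10 := Pw.x2.continuous
  unfold energy intsq
  have e := split8sq (L := L) (c1 := ρ) (f1 := fun x => pdt u x t)
    (c2 := α) (f2 := fun x => pdx u x t)
    (c3 := lm) (f3 := fun x => φ x t - u x t)
    (c4 := ρ₁) (f4 := fun x => pdt φ x t)
    (c5 := K) (f5 := fun x => pdx φ x t + ψ x t)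
    (c6 := b) (f6 := fun x => pdx ψ x t)
    (c7 := ρ₃) (f7 := fun x => pdt w x t)
    (c8 := δ) (f8 := fun x => pdx w x t)
    (by fun_prop) (by fun_prop) (by fun_prop) (by fun_prop) (by fun_prop)
    (by fun_prop) (by fun_prop) (by fun_prop)
  rw [e]

include hS in
/-- Bound for the absolute value of the auxiliary functional. -/
lemma aux_abs_bound {c_p : ℝ} (hL : 0 < L) (hcp : 0 < c_p)
    (hρ : 0 < ρ) (hρ₁ : 0 < ρ₁) (hρ₃ : 0 < ρ₃) (hμ : 0 < μ) (hγ : 0 < γ)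
    (hpoin : ∀ f : ℝ → ℝ, ContDiff ℝ 1 f → f 0 = 0 → f L = 0 →
      (∫ x in (0:ℝ)..L, (f x)^2) ≤ c_p * ∫ x in (0:ℝ)..L, (deriv f x)^2)
    {t : ℝ} (ht : 0 ≤ t) :
    |∫ x in (0:ℝ)..L, PG ρ ρ₁ ρ₃ μ γ u φ w x t|
      ≤ (ρ/2)*intsq L (pdt u) t + ((ρ+μ)*c_p/2)*intsq L (pdx u) t
        + (ρ₁/2)*intsq L (pdt φ) t
        + ((ρ₁+γ)*c_p)*intsq L (fun x s => pdx φ x s + ψ x s) t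
        + ((ρ₁+γ)*c_p*c_p)*intsq L (pdx ψ) t
        + (ρ₃/2)*intsq L (pdt w) t + (ρ₃*c_p/2)*intsq L (pdx w) t := by
  have Pu := mkPack hS.smooth_u
  have Pp := mkPack hS.smooth_phi
  have Ps := mkPack hS.smooth_psi
  have Pw := mkPack hS.smooth_w
  obtain ⟨bu0, buL, bp0, bpL, bs0, bsL, bw0, bwL⟩ := hS.bc t ht
  have c1 := Pu.t2.continuous; have c3 := Pp.c1.continuous
  have c4 := Pu.c1.continuous; have c5 := Pp.t2.continuous
  have c6 := Pp.x2.continuous; have c7 := Ps.c1.continuous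
  have c8 := Ps.x2.continuous
  have c9 := Pw.t2.continuous; have c11 := Pw.c1.continuous
  have key : ∀ sgn : ℝ, sgn = 1 ∨ sgn = -1 →
      sgn * (∫ x in (0:ℝ)..L, PG ρ ρ₁ ρ₃ μ γ u φ w x t)
        ≤ (ρ/2)*intsq L u t + (ρ/2)*intsq L (pdt u) t + (ρ₁/2)*intsq L φ t
          + (ρ₁/2)*intsq L (pdt φ) t + (ρ₃/2)*intsq L w t + (ρ₃/2)*intsq L (pdt w) t
          + (μ/2)*intsq L u t + (γ/2)*intsq L φ t := by
    intro sgn hsgn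
    have hmono : sgn * (∫ x in (0:ℝ)..L, PG ρ ρ₁ ρ₃ μ γ u φ w x t)
        = ∫ x in (0:ℝ)..L, sgn * PG ρ ρ₁ ρ₃ μ γ u φ w x t := by
      rw [intervalIntegral.integral_const_mul]
    rw [hmono]
    have hle : (∫ x in (0:ℝ)..L, sgn * PG ρ ρ₁ ρ₃ μ γ u φ w x t)
        ≤ ∫ x in (0:ℝ)..L, ((ρ/2)*(u x t)^2 + (ρ/2)*(pdt u x t)^2 + (ρ₁/2)*(φ x t)^2
          + (ρ₁/2)*(pdt φ x t)^2 + (ρ₃/2)*(w x t)^2 + (ρ₃/2)*(pdt w x t)^2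
          + (μ/2)*(u x t)^2 + (γ/2)*(φ x t)^2) := by
      apply intervalIntegral.integral_mono_on hL.le
      · apply Continuous.intervalIntegrable; unfold PG; fun_prop
      · apply Continuous.intervalIntegrable; fun_prop
      · intro x _
        unfold PG
        rcases hsgn with h | h <;> subst h
        · nlinarith [sq_nonneg (u x t - pdt u x t), sq_nonneg (φ x t - pdt φ x t),
            sq_nonneg (w x t - pdt w x t), hρ.le, hρ₁.le, hρ₃.le,
            mul_nonneg hμ.le (sq_nonneg (u x t)), mul_nonneg hγ.le (sq_nonneg (φ x t))]
        · nlinarith [sq_nonneg (u x t + pdt u x t), sq_nonneg (φ x t + pdt φ x t),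
            sq_nonneg (w x t + pdt w x t), hρ.le, hρ₁.le, hρ₃.le,
            mul_nonneg hμ.le (sq_nonneg (u x t)), mul_nonneg hγ.le (sq_nonneg (φ x t))]
    calc (∫ x in (0:ℝ)..L, sgn * PG ρ ρ₁ ρ₃ μ γ u φ w x t) ≤ _ := hle
      _ = (ρ/2)*intsq L u t + (ρ/2)*intsq L (pdt u) t + (ρ₁/2)*intsq L φ t
          + (ρ₁/2)*intsq L (pdt φ) t + (ρ₃/2)*intsq L w t + (ρ₃/2)*intsq L (pdt w) t
          + (μ/2)*intsq L u t + (γ/2)*intsq L φ t := by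
        unfold intsq
        have e := split8sq (L := L) (c1 := ρ/2) (f1 := fun x => u x t)
          (c2 := ρ/2) (f2 := fun x => pdt u x t)
          (c3 := ρ₁/2) (f3 := fun x => φ x t)
          (c4 := ρ₁/2) (f4 := fun x => pdt φ x t)
          (c5 := ρ₃/2) (f5 := fun x => w x t)
          (c6 := ρ₃/2) (f6 := fun x => pdt w x t)
          (c7 := μ/2) (f7 := fun x => u x t)
          (c8 := γ/2) (f8 := fun x => φ x t)
          (by fun_prop) (by fun_prop) (by fun_prop) (by fun_prop) (by fun_prop)
          (by fun_prop) (by fun_prop) (by fun_prop)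
        rw [e]
  -- Poincaré inequalities
  have pU : intsq L u t ≤ c_p * intsq L (pdx u) t := poincare' hpoin Pu.c1 bu0 buL
  have pP : intsq L φ t ≤ c_p * intsq L (pdx φ) t := poincare' hpoin Pp.c1 bp0 bpL
  have pS : intsq L ψ t ≤ c_p * intsq L (pdx ψ) t := poincare' hpoin Ps.c1 bs0 bsL
  have pW : intsq L w t ≤ c_p * intsq L (pdx w) t := poincare' hpoin Pw.c1 bw0 bwL
  -- φ_x bound
  have pPX : intsq L (pdx φ) t
      ≤ 2*intsq L (fun x s => pdx φ x s + ψ x s) t + 2*intsq L ψ t := by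
    unfold intsq
    have h2 : (∫ x in (0:ℝ)..L, (pdx φ x t)^2)
        ≤ ∫ x in (0:ℝ)..L, (2*((pdx φ x t + ψ x t))^2 + 2*(ψ x t)^2) := by
      apply intervalIntegral.integral_mono_on hL.le
      · apply Continuous.intervalIntegrable; fun_prop
      · apply Continuous.intervalIntegrable; fun_prop
      · intro x _
        nlinarith [sq_nonneg (pdx φ x t + 2*ψ x t)]
    have h3 : (∫ x in (0:ℝ)..L, (2*((pdx φ x t + ψ x t))^2 + 2*(ψ x t)^2))
        = 2*(∫ x in (0:ℝ)..L, (pdx φ x t + ψ x t)^2) + 2*∫ x in (0:ℝ)..L, (ψ x t)^2 := by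
      rw [intervalIntegral.integral_add (Continuous.intervalIntegrable (by fun_prop) 0 L)
        (Continuous.intervalIntegrable (by fun_prop) 0 L),
        intervalIntegral.integral_const_mul, intervalIntegral.integral_const_mul]
    rw [h3] at h2
    exact h2
  -- combine
  have hnn : ∀ f : ℝ → ℝ → ℝ, 0 ≤ intsq L f t := fun f => intsq_nonneg hL.le f t
  have habs : |∫ x in (0:ℝ)..L, PG ρ ρ₁ ρ₃ μ γ u φ w x t|
      ≤ (ρ/2)*intsq L u t + (ρ/2)*intsq L (pdt u) t + (ρ₁/2)*intsq L φ t
          + (ρ₁/2)*intsq L (pdt φ) t + (ρ₃/2)*intsq L w t + (ρ₃/2)*intsq L (pdt w) t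
          + (μ/2)*intsq L u t + (γ/2)*intsq L φ t := by
    rcases abs_cases (∫ x in (0:ℝ)..L, PG ρ ρ₁ ρ₃ μ γ u φ w x t) with ⟨he, _⟩ | ⟨he, _⟩
    · rw [he]
      have := key 1 (Or.inl rfl); linarith
    · rw [he]
      have := key (-1) (Or.inr rfl); linarith
  have e1 : (ρ/2 + μ/2) * intsq L u t ≤ (ρ/2 + μ/2) * (c_p * intsq L (pdx u) t) :=
    mul_le_mul_of_nonneg_left pU (by positivity)
  have e2 : (ρ₁/2 + γ/2) * intsq L φ t ≤ (ρ₁/2 + γ/2) * (c_p * intsq L (pdx φ) t) :=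
    mul_le_mul_of_nonneg_left pP (by positivity)
  have e3 : (ρ₁/2 + γ/2) * (c_p * intsq L (pdx φ) t)
      ≤ (ρ₁/2 + γ/2) * (c_p * (2*intsq L (fun x s => pdx φ x s + ψ x s) t + 2*intsq L ψ t)) := by
    apply mul_le_mul_of_nonneg_left _ (by positivity)
    exact mul_le_mul_of_nonneg_left pPX hcp.le
  have e4 : (ρ₁/2 + γ/2) * (c_p * (2 * intsq L ψ t))
      ≤ (ρ₁/2 + γ/2) * (c_p * (2 * (c_p * intsq L (pdx ψ) t))) := by
    apply mul_le_mul_of_nonneg_left _ (by positivity)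
    apply mul_le_mul_of_nonneg_left _ hcp.le
    linarith
  have e5 : (ρ₃/2) * intsq L w t ≤ (ρ₃/2) * (c_p * intsq L (pdx w) t) :=
    mul_le_mul_of_nonneg_left pW (by positivity)
  linarith [habs, e1, e2, e3, e4, e5, hnn (pdx ψ), hnn (fun x s => pdx φ x s + ψ x s)]

include hS in
/-- Bound on the coupling/damping cross terms. -/
lemma cross_bound {c_p m : ℝ} (hL : 0 < L) (hcp : 0 < c_p) (hδ : 0 < δ) (hκ : 0 < κ)
    (hm : 0 < m)
    (hpoin : ∀ f : ℝ → ℝ, ContDiff ℝ 1 f → f 0 = 0 → f L = 0 →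
      (∫ x in (0:ℝ)..L, (f x)^2) ≤ c_p * ∫ x in (0:ℝ)..L, (deriv f x)^2)
    {t : ℝ} (ht : 0 ≤ t) :
    (∫ x in (0:ℝ)..L, (-(κ * (pdx w x t * pdx (pdt w) x t))
        + β * (pdx w x t * pdt φ x t) + β * (pdx φ x t * pdt w x t)))
      ≤ (δ/2)*intsq L (pdx w) t + (κ^2/δ)*intsq L (pdx (pdt w)) t
        + (β^2/δ)*intsq L (pdt φ) t
        + m*intsq L (fun x s => pdx φ x s + ψ x s) t + (m*c_p)*intsq L (pdx ψ) t
        + (β^2/(2*m))*intsq L (pdt w) t := by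
  have Pp := mkPack hS.smooth_phi
  have Ps := mkPack hS.smooth_psi
  have Pw := mkPack hS.smooth_w
  obtain ⟨_, _, _, _, bs0, bsL, _, _⟩ := hS.bc t ht
  have c5 := Pp.t2.continuous; have c6 := Pp.x2.continuous
  have c7 := Ps.c1.continuous; have c8 := Ps.x2.continuous
  have c9 := Pw.t2.continuous; have c10 := Pw.x2.continuous
  have d8 := Pw.xt1.continuous
  have hle : (∫ x in (0:ℝ)..L, (-(κ * (pdx w x t * pdx (pdt w) x t))
        + β * (pdx w x t * pdt φ x t) + β * (pdx φ x t * pdt w x t)))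
      ≤ ∫ x in (0:ℝ)..L, ((δ/2)*(pdx w x t)^2 + (κ^2/δ)*(pdx (pdt w) x t)^2
        + (β^2/δ)*(pdt φ x t)^2 + m*((pdx φ x t + ψ x t))^2 + m*(ψ x t)^2
        + (β^2/(2*m))*(pdt w x t)^2) := by
    apply intervalIntegral.integral_mono_on hL.le
    · apply Continuous.intervalIntegrable; fun_prop
    · apply Continuous.intervalIntegrable; fun_prop
    · intro x _
      have k1 : -(κ * (pdx w x t * pdx (pdt w) x t))
          ≤ (δ/4)*(pdx w x t)^2 + (κ^2/δ)*(pdx (pdt w) x t)^2 := by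
        have heq : (δ/4)*(pdx w x t)^2 + (κ^2/δ)*(pdx (pdt w) x t)^2
            + (κ * (pdx w x t * pdx (pdt w) x t))
            = (δ*pdx w x t + 2*κ*pdx (pdt w) x t)^2/(4*δ) := by
          field_simp; ring
        nlinarith [div_nonneg (sq_nonneg (δ*pdx w x t + 2*κ*pdx (pdt w) x t)) (by linarith : (0:ℝ) ≤ 4*δ)]
      have k2 : β * (pdx w x t * pdt φ x t)
          ≤ (δ/4)*(pdx w x t)^2 + (β^2/δ)*(pdt φ x t)^2 := by
        have heq : (δ/4)*(pdx w x t)^2 + (β^2/δ)*(pdt φ x t)^2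
            - β * (pdx w x t * pdt φ x t)
            = (δ*pdx w x t - 2*β*pdt φ x t)^2/(4*δ) := by
          field_simp; ring
        nlinarith [div_nonneg (sq_nonneg (δ*pdx w x t - 2*β*pdt φ x t)) (by linarith : (0:ℝ) ≤ 4*δ)]
      have k3 : β * (pdx φ x t * pdt w x t)
          ≤ (m/2)*(pdx φ x t)^2 + (β^2/(2*m))*(pdt w x t)^2 := by
        have heq : (m/2)*(pdx φ x t)^2 + (β^2/(2*m))*(pdt w x t)^2
            - β * (pdx φ x t * pdt w x t)
            = (m*pdx φ x t - β*pdt w x t)^2/(2*m) := by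
          field_simp; ring
        nlinarith [div_nonneg (sq_nonneg (m*pdx φ x t - β*pdt w x t)) (by linarith : (0:ℝ) ≤ 2*m)]
      have k4 : (m/2)*(pdx φ x t)^2 ≤ m*((pdx φ x t + ψ x t))^2 + m*(ψ x t)^2 := by
        nlinarith [sq_nonneg (pdx φ x t + 2*ψ x t), hm.le]
      linarith
  have hsplit : (∫ x in (0:ℝ)..L, ((δ/2)*(pdx w x t)^2 + (κ^2/δ)*(pdx (pdt w) x t)^2
        + (β^2/δ)*(pdt φ x t)^2 + m*((pdx φ x t + ψ x t))^2 + m*(ψ x t)^2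
        + (β^2/(2*m))*(pdt w x t)^2))
      = (δ/2)*intsq L (pdx w) t + (κ^2/δ)*intsq L (pdx (pdt w)) t
        + (β^2/δ)*intsq L (pdt φ) t + m*intsq L (fun x s => pdx φ x s + ψ x s) t
        + m*intsq L ψ t + (β^2/(2*m))*intsq L (pdt w) t := by
    unfold intsq
    have e := split8sq (L := L) (c1 := δ/2) (f1 := fun x => pdx w x t)
      (c2 := κ^2/δ) (f2 := fun x => pdx (pdt w) x t)
      (c3 := β^2/δ) (f3 := fun x => pdt φ x t)
      (c4 := m) (f4 := fun x => pdx φ x t + ψ x t)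
      (c5 := m) (f5 := fun x => ψ x t)
      (c6 := β^2/(2*m)) (f6 := fun x => pdt w x t)
      (c7 := 0) (f7 := fun _ => 0) (c8 := 0) (f8 := fun _ => 0)
      (by fun_prop) (by fun_prop) (by fun_prop) (by fun_prop) (by fun_prop) (by fun_prop)
      continuous_const continuous_const
    have e2 : (∫ x in (0:ℝ)..L, ((δ/2)*(pdx w x t)^2 + (κ^2/δ)*(pdx (pdt w) x t)^2
        + (β^2/δ)*(pdt φ x t)^2 + m*((pdx φ x t + ψ x t))^2 + m*(ψ x t)^2
        + (β^2/(2*m))*(pdt w x t)^2))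
        = ∫ x in (0:ℝ)..L, ((δ/2)*(pdx w x t)^2 + (κ^2/δ)*(pdx (pdt w) x t)^2
        + (β^2/δ)*(pdt φ x t)^2 + m*((pdx φ x t + ψ x t))^2 + m*(ψ x t)^2
        + (β^2/(2*m))*(pdt w x t)^2 + 0*((0:ℝ))^2 + 0*((0:ℝ))^2) := by
      congr 1; funext x; ring
    rw [e2, e]
    ring
  have pS : intsq L ψ t ≤ c_p * intsq L (pdx ψ) t := poincare' hpoin Ps.c1 bs0 bsL
  have hmS : m * intsq L ψ t ≤ m * (c_p * intsq L (pdx ψ) t) :=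
    mul_le_mul_of_nonneg_left pS hm.le
  rw [hsplit] at hle
  nlinarith [hle, hmS]

include hS in
/-- Poincaré for the velocity of w (needs t > 0). -/
lemma poincare_wt {c_p : ℝ}
    (hpoin : ∀ f : ℝ → ℝ, ContDiff ℝ 1 f → f 0 = 0 → f L = 0 →
      (∫ x in (0:ℝ)..L, (f x)^2) ≤ c_p * ∫ x in (0:ℝ)..L, (deriv f x)^2)
    {t : ℝ} (ht : 0 < t) :
    intsq L (pdt w) t ≤ c_p * intsq L (pdx (pdt w)) t := by
  have Pw := mkPack hS.smooth_w
  have h0 : pdt w 0 t = 0 :=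
    deriv_zero_of_zero_on_nonneg ht (fun s hs => (hS.bc s hs).2.2.2.2.2.2.1)
  have hLv : pdt w L t = 0 :=
    deriv_zero_of_zero_on_nonneg ht (fun s hs => (hS.bc s hs).2.2.2.2.2.2.2)
  exact poincare' hpoin (Pw.t2.of_le one_le_two) h0 hLv

include hS in
lemma energy_nonneg (hL : 0 < L) (hρ : 0 ≤ ρ) (hα : 0 ≤ α) (hlm : 0 ≤ lm) (hρ₁ : 0 ≤ ρ₁)
    (hK : 0 ≤ K) (hb : 0 ≤ b) (hρ₃ : 0 ≤ ρ₃) (hδ : 0 ≤ δ) (t : ℝ) :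
    0 ≤ energy L ρ α lm ρ₁ K b ρ₃ δ u φ ψ w t := by
  rw [energy_split hS hL t]
  have nn : ∀ f : ℝ → ℝ → ℝ, 0 ≤ intsq L f t := fun f => intsq_nonneg hL.le f t
  have m1 := mul_nonneg hρ (nn (pdt u))
  have m2 := mul_nonneg hα (nn (pdx u))
  have m3 := mul_nonneg hlm (nn (fun x s => φ x s - u x s))
  have m4 := mul_nonneg hρ₁ (nn (pdt φ))
  have m5 := mul_nonneg hK (nn (fun x s => pdx φ x s + ψ x s))
  have m6 := mul_nonneg hb (nn (pdx ψ))
  have m7 := mul_nonneg hρ₃ (nn (pdt w))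
  have m8 := mul_nonneg hδ (nn (pdx w))
  linarith

end Main

end Shear

/-- exponential decay of the energy. -/
theorem energy_exponential_decay
    {L ρ α lm μ ρ₁ K γ b ρ₃ δ κ β c_p : ℝ}
    (hL : 0 < L) (hρ : 0 < ρ) (hα : 0 < α) (hlm : 0 < lm) (hμ : 0 < μ)
    (hρ₁ : 0 < ρ₁) (hK : 0 < K) (hγ : 0 < γ) (hb : 0 < b) (hρ₃ : 0 < ρ₃)
    (hδ : 0 < δ) (hκ : 0 < κ) (hβ : β ≠ 0) (hcp : 0 < c_p)
    (hpoin : ∀ f : ℝ → ℝ, ContDiff ℝ 1 f → f 0 = 0 → f L = 0 →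
      (∫ x in (0:ℝ)..L, (f x)^2) ≤ c_p * ∫ x in (0:ℝ)..L, (deriv f x)^2) :
    ∃ σ₁ : ℝ, 0 < σ₁ ∧ ∃ c : ℝ, 0 < c ∧
      ∀ u φ ψ w : ℝ → ℝ → ℝ,
        IsShearSolution L ρ α lm μ ρ₁ K γ b ρ₃ δ κ β u φ ψ w →
        ∀ t : ℝ, 0 ≤ t →
          energy L ρ α lm ρ₁ K b ρ₃ δ u φ ψ w t
            ≤ (c * energy L ρ α lm ρ₁ K b ρ₃ δ u φ ψ w 0) * Real.exp (-σ₁ * t) := by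
  open Shear in
  -- constants
  set m : ℝ := min (K/2) (b/(2*c_p)) with hmdef
  have hm0 : 0 < m := lt_min (by positivity) (by positivity)
  have hmK : m ≤ K/2 := min_le_left _ _
  have hmb : m * c_p ≤ b/2 := by
    have h : m ≤ b/(2*c_p) := min_le_right _ _
    rw [le_div_iff₀ (by positivity)] at h
    linarith
  clear_value m
  set C₃ : ℝ := 3 + (ρ+μ)*c_p/α + 2*(ρ₁+γ)*c_p/K + 2*(ρ₁+γ)*c_p*c_p/b + ρ₃*c_p/δ with hC3def
  have t1 : 0 ≤ (ρ+μ)*c_p/α := by positivity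
  have t2 : 0 ≤ 2*(ρ₁+γ)*c_p/K := by positivity
  have t3 : 0 ≤ 2*(ρ₁+γ)*c_p*c_p/b := by positivity
  have t4 : 0 ≤ ρ₃*c_p/δ := by positivity
  have hC30 : 3 ≤ C₃ := by rw [hC3def]; linarith
  clear_value C₃
  -- coefficient facts for the equivalence
  have cA : ρ/2 ≤ (C₃/2)*ρ := by nlinarith [hρ.le]
  have cB : (ρ+μ)*c_p/2 ≤ (C₃/2)*α := by
    have h : (ρ+μ)*c_p/α ≤ C₃ := by rw [hC3def]; linarith
    rw [div_le_iff₀ hα] at h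
    linarith
  have cD : ρ₁/2 ≤ (C₃/2)*ρ₁ := by nlinarith [hρ₁.le]
  have cF : (ρ₁+γ)*c_p ≤ (C₃/2)*K := by
    have h : 2*(ρ₁+γ)*c_p/K ≤ C₃ := by rw [hC3def]; linarith
    rw [div_le_iff₀ hK] at h
    linarith
  have cG : (ρ₁+γ)*c_p*c_p ≤ (C₃/2)*b := by
    have h : 2*(ρ₁+γ)*c_p*c_p/b ≤ C₃ := by rw [hC3def]; linarith
    rw [div_le_iff₀ hb] at h
    linarith
  have cH : ρ₃/2 ≤ (C₃/2)*ρ₃ := by nlinarith [hρ₃.le]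
  have cI : ρ₃*c_p/2 ≤ (C₃/2)*δ := by
    have h : ρ₃*c_p/δ ≤ C₃ := by rw [hC3def]; linarith
    rw [div_le_iff₀ hδ] at h
    linarith
  -- the Lyapunov constant
  set N : ℝ := 3*ρ/(2*μ) + (3*ρ₁/2 + β^2/δ)/γ + κ/δ + (3*ρ₃/2 + β^2/(2*m))*c_p/κ
      + C₃ + 1 with hNdef
  have s1 : 0 ≤ 3*ρ/(2*μ) := by positivity
  have s2 : 0 ≤ (3*ρ₁/2 + β^2/δ)/γ := by positivity
  have s3 : 0 ≤ κ/δ := by positivity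
  have s4 : 0 ≤ (3*ρ₃/2 + β^2/(2*m))*c_p/κ := by
    apply div_nonneg _ hκ.le
    apply mul_nonneg _ hcp.le
    have : 0 ≤ β^2/(2*m) := div_nonneg (sq_nonneg β) (by linarith)
    linarith
  clear_value N
  have hNC3 : C₃ + 1 ≤ N := by rw [hNdef]; linarith
  have hN0 : 0 < N := by linarith
  have hNC30 : 0 < N + C₃ := by linarith
  -- N conditions
  have n1 : 3*ρ/2 ≤ N*μ := by
    have h : 3*ρ/(2*μ) ≤ N := by rw [hNdef]; linarith
    rw [div_le_iff₀ (by positivity : (0:ℝ) < 2*μ)] at h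
    linarith
  have n2 : 3*ρ₁/2 + β^2/δ ≤ N*γ := by
    have h : (3*ρ₁/2 + β^2/δ)/γ ≤ N := by rw [hNdef]; linarith
    rw [div_le_iff₀ hγ] at h
    linarith
  have n3 : κ^2/δ + (3*ρ₃/2 + β^2/(2*m))*c_p ≤ N*κ := by
    have h : κ/δ + (3*ρ₃/2 + β^2/(2*m))*c_p/κ ≤ N := by rw [hNdef]; linarith
    have h2 := mul_le_mul_of_nonneg_right h hκ.le
    have h3 : (κ/δ + (3*ρ₃/2 + β^2/(2*m))*c_p/κ)*κ
        = κ^2/δ + (3*ρ₃/2 + β^2/(2*m))*c_p := by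
      field_simp
    rw [h3] at h2
    exact h2
  set sig : ℝ := 1/(N + C₃) with hsigdef
  have hsig0 : 0 < sig := by rw [hsigdef]; positivity
  have hsigeq : sig*N + sig*C₃ = 1 := by
    rw [hsigdef]; field_simp
  clear_value sig
  refine ⟨sig, hsig0, N + C₃, hNC30, ?_⟩
  intro u φ ψ w hS t ht
  -- nonnegativity of the energy
  have hEnn : ∀ s : ℝ, 0 ≤ energy L ρ α lm ρ₁ K b ρ₃ δ u φ ψ w s := fun s =>
    energy_nonneg hS hL hρ.le hα.le hlm.le hρ₁.le hK.le hb.le hρ₃.le hδ.le s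
  -- the equivalence |P| ≤ C₃ E
  have hPboth : ∀ s : ℝ, 0 ≤ s →
      |∫ x in (0:ℝ)..L, PG ρ ρ₁ ρ₃ μ γ u φ w x s|
        ≤ C₃ * energy L ρ α lm ρ₁ K b ρ₃ δ u φ ψ w s := by
    intro s hs
    have hb' := aux_abs_bound hS hL hcp hρ hρ₁ hρ₃ hμ hγ hpoin hs
    rw [energy_split hS hL s]
    have nn : ∀ f : ℝ → ℝ → ℝ, 0 ≤ intsq L f s := fun f => intsq_nonneg hL.le f s
    have q1 := mul_le_mul_of_nonneg_right cA (nn (pdt u))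
    have q2 := mul_le_mul_of_nonneg_right cB (nn (pdx u))
    have q3 := mul_le_mul_of_nonneg_right cD (nn (pdt φ))
    have q4 := mul_le_mul_of_nonneg_right cF (nn (fun x r => pdx φ x r + ψ x r))
    have q5 := mul_le_mul_of_nonneg_right cG (nn (pdx ψ))
    have q6 := mul_le_mul_of_nonneg_right cH (nn (pdt w))
    have q7 := mul_le_mul_of_nonneg_right cI (nn (pdx w))
    have q8 := mul_nonneg (mul_nonneg (by linarith : (0:ℝ) ≤ C₃/2) hlm.le)
      (nn (fun x r => φ x r - u x r))
    linarith [hb', q1, q2, q3, q4, q5, q6, q7, q8]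
  -- key differential inequality
  have hkey : ∀ s : ℝ, 0 < s →
      N * ((1/2) * ∫ x in (0:ℝ)..L, EGt ρ α lm ρ₁ K b ρ₃ δ u φ ψ w x s)
        + (∫ x in (0:ℝ)..L, PGt ρ ρ₁ ρ₃ μ γ u φ w x s)
      ≤ -(sig * (N * energy L ρ α lm ρ₁ K b ρ₃ δ u φ ψ w s
          + ∫ x in (0:ℝ)..L, PG ρ ρ₁ ρ₃ μ γ u φ w x s)) := by
    intro s hs
    have hXb := cross_bound hS hL hcp hδ hκ hm0 hpoin hs.le
    have hHJ := poincare_wt hS hpoin hs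
    have hPub := (abs_le.mp (hPboth s hs.le)).2
    rw [energy_split hS hL s] at hPub
    rw [energy_deriv_value hS hL hs, aux_deriv_value hS hL hs, energy_split hS hL s]
    set As := intsq L (pdt u) s with hAs
    set Bs := intsq L (pdx u) s with hBs
    set Cs := intsq L (fun x r => φ x r - u x r) s with hCs
    set Ds := intsq L (pdt φ) s with hDs
    set Fs := intsq L (fun x r => pdx φ x r + ψ x r) s with hFs
    set Gs := intsq L (pdx ψ) s with hGs
    set Hs := intsq L (pdt w) s with hHs
    set Is := intsq L (pdx w) s with hIs
    set Js := intsq L (pdx (pdt w)) s with hJs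
    set Ps := ∫ x in (0:ℝ)..L, PG ρ ρ₁ ρ₃ μ γ u φ w x s with hPs2
    set Xs := ∫ x in (0:ℝ)..L, (-(κ * (pdx w x s * pdx (pdt w) x s))
        + β * (pdx w x s * pdt φ x s) + β * (pdx φ x s * pdt w x s)) with hXs2
    have nnA : 0 ≤ As := intsq_nonneg hL.le _ s
    have nnB : 0 ≤ Bs := intsq_nonneg hL.le _ s
    have nnC : 0 ≤ Cs := intsq_nonneg hL.le _ s
    have nnD : 0 ≤ Ds := intsq_nonneg hL.le _ s
    have nnF : 0 ≤ Fs := intsq_nonneg hL.le _ s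
    have nnG : 0 ≤ Gs := intsq_nonneg hL.le _ s
    have nnH : 0 ≤ Hs := intsq_nonneg hL.le _ s
    have nnI : 0 ≤ Is := intsq_nonneg hL.le _ s
    have nnJ : 0 ≤ Js := intsq_nonneg hL.le _ s
    clear_value As Bs Cs Ds Fs Gs Hs Is Js Ps Xs
    have r1 := mul_le_mul_of_nonneg_right n1 nnA
    have r2 := mul_le_mul_of_nonneg_right n2 nnD
    have r3 := mul_le_mul_of_nonneg_right n3 nnJ
    have r4 := mul_le_mul_of_nonneg_right hmK nnF
    have r5 := mul_le_mul_of_nonneg_right hmb nnG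
    have r6 : (3*ρ₃/2 + β^2/(2*m))*Hs ≤ (3*ρ₃/2 + β^2/(2*m))*(c_p*Js) := by
      apply mul_le_mul_of_nonneg_left hHJ
      have : 0 ≤ β^2/(2*m) := div_nonneg (sq_nonneg β) (by linarith)
      linarith
    have r7 := mul_nonneg (by linarith : (0:ℝ) ≤ α/2) nnB
    have r8 := mul_nonneg (by linarith : (0:ℝ) ≤ lm/2) nnC
    -- bound the energy-derivative part plus aux part by -E
    have hmain : N * ((1/2) * (-2*μ*As - 2*γ*Ds - 2*κ*Js))
        + (ρ*As + ρ₁*Ds + ρ₃*Hs - α*Bs - lm*Cs - K*Fs - b*Gs - δ*Is + Xs)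
        ≤ -((1/2)*(ρ*As + α*Bs + lm*Cs + ρ₁*Ds + K*Fs + b*Gs + ρ₃*Hs + δ*Is)) := by
      linarith [hXb, r1, r2, r3, r4, r5, r6, r7, r8]
    -- combine with the equivalence bound
    have hsp : sig * Ps ≤ sig * (C₃ * ((1/2)*(ρ*As + α*Bs + lm*Cs + ρ₁*Ds + K*Fs + b*Gs
        + ρ₃*Hs + δ*Is))) := mul_le_mul_of_nonneg_left hPub hsig0.le
    have hEs : 0 ≤ (1/2)*(ρ*As + α*Bs + lm*Cs + ρ₁*Ds + K*Fs + b*Gs + ρ₃*Hs + δ*Is) := by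
      have e1 := mul_nonneg hρ.le nnA
      have e2 := mul_nonneg hα.le nnB
      have e3 := mul_nonneg hlm.le nnC
      have e4 := mul_nonneg hρ₁.le nnD
      have e5 := mul_nonneg hK.le nnF
      have e6 := mul_nonneg hb.le nnG
      have e7 := mul_nonneg hρ₃.le nnH
      have e8 := mul_nonneg hδ.le nnI
      linarith
    have heq : (sig*N + sig*C₃) * ((1/2)*(ρ*As + α*Bs + lm*Cs + ρ₁*Ds + K*Fs + b*Gs
        + ρ₃*Hs + δ*Is)) = 1 * ((1/2)*(ρ*As + α*Bs + lm*Cs + ρ₁*Ds + K*Fs + b*Gs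
        + ρ₃*Hs + δ*Is)) := by rw [hsigeq]
    linarith [hmain, hsp, heq]
  -- derivative of the Lyapunov functional
  have hLder : ∀ s : ℝ, HasDerivAt (fun r => N * energy L ρ α lm ρ₁ K b ρ₃ δ u φ ψ w r
      + ∫ x in (0:ℝ)..L, PG ρ ρ₁ ρ₃ μ γ u φ w x r)
      (N * ((1/2) * ∫ x in (0:ℝ)..L, EGt ρ α lm ρ₁ K b ρ₃ δ u φ ψ w x s)
        + ∫ x in (0:ℝ)..L, PGt ρ ρ₁ ρ₃ μ γ u φ w x s) s := fun s =>
    (HasDerivAt.const_mul N (energy_hasDerivAt hS s)).add (aux_hasDerivAt hS s)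
  have hgder : ∀ s : ℝ, HasDerivAt (fun r => (N * energy L ρ α lm ρ₁ K b ρ₃ δ u φ ψ w r
      + ∫ x in (0:ℝ)..L, PG ρ ρ₁ ρ₃ μ γ u φ w x r) * Real.exp (sig * r))
      ((N * ((1/2) * ∫ x in (0:ℝ)..L, EGt ρ α lm ρ₁ K b ρ₃ δ u φ ψ w x s)
        + ∫ x in (0:ℝ)..L, PGt ρ ρ₁ ρ₃ μ γ u φ w x s) * Real.exp (sig * s)
        + (N * energy L ρ α lm ρ₁ K b ρ₃ δ u φ ψ w s
          + ∫ x in (0:ℝ)..L, PG ρ ρ₁ ρ₃ μ γ u φ w x s) * (Real.exp (sig * s) * sig)) s := by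
    intro s
    have hexp : HasDerivAt (fun r => Real.exp (sig * r)) (Real.exp (sig * s) * sig) s := by
      have h := (hasDerivAt_id s).const_mul sig
      have h2 : HasDerivAt (fun r : ℝ => sig * r) sig s := by simpa using h
      exact h2.exp
    exact (hLder s).mul hexp
  have hanti : AntitoneOn (fun r => (N * energy L ρ α lm ρ₁ K b ρ₃ δ u φ ψ w r
      + ∫ x in (0:ℝ)..L, PG ρ ρ₁ ρ₃ μ γ u φ w x r) * Real.exp (sig * r)) (Ici 0) := by
    apply antitoneOn_of_deriv_nonpos (convex_Ici 0)
    · have : Differentiable ℝ (fun r => (N * energy L ρ α lm ρ₁ K b ρ₃ δ u φ ψ w r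
          + ∫ x in (0:ℝ)..L, PG ρ ρ₁ ρ₃ μ γ u φ w x r) * Real.exp (sig * r)) :=
        fun s => (hgder s).differentiableAt
      exact this.continuous.continuousOn
    · intro s _
      exact (hgder s).differentiableAt.differentiableWithinAt
    · intro s hs
      rw [interior_Ici] at hs
      rw [(hgder s).deriv]
      have hk := hkey s hs
      have hepos := Real.exp_pos (sig * s)
      have hfactor : (N * ((1/2) * ∫ x in (0:ℝ)..L, EGt ρ α lm ρ₁ K b ρ₃ δ u φ ψ w x s)
        + ∫ x in (0:ℝ)..L, PGt ρ ρ₁ ρ₃ μ γ u φ w x s) * Real.exp (sig * s)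
        + (N * energy L ρ α lm ρ₁ K b ρ₃ δ u φ ψ w s
          + ∫ x in (0:ℝ)..L, PG ρ ρ₁ ρ₃ μ γ u φ w x s) * (Real.exp (sig * s) * sig)
        = ((N * ((1/2) * ∫ x in (0:ℝ)..L, EGt ρ α lm ρ₁ K b ρ₃ δ u φ ψ w x s)
        + ∫ x in (0:ℝ)..L, PGt ρ ρ₁ ρ₃ μ γ u φ w x s)
          + sig * (N * energy L ρ α lm ρ₁ K b ρ₃ δ u φ ψ w s
          + ∫ x in (0:ℝ)..L, PG ρ ρ₁ ρ₃ μ γ u φ w x s)) * Real.exp (sig * s) := by ring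
      rw [hfactor]
      apply mul_nonpos_iff.mpr
      exact Or.inr ⟨by linarith, hepos.le⟩
  -- conclude
  have h0mem : (0:ℝ) ∈ Ici (0:ℝ) := Set.mem_Ici.mpr le_rfl
  have htmem : t ∈ Ici (0:ℝ) := Set.mem_Ici.mpr ht
  have hg := hanti h0mem htmem ht
  simp only [mul_zero, Real.exp_zero, mul_one] at hg
  have hP0 := (abs_le.mp (hPboth 0 le_rfl)).2
  have hPt := (abs_le.mp (hPboth t ht)).1
  have hEt := hEnn t
  have hE0 := hEnn 0
  have h1 : energy L ρ α lm ρ₁ K b ρ₃ δ u φ ψ w t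
      ≤ N * energy L ρ α lm ρ₁ K b ρ₃ δ u φ ψ w t
        + ∫ x in (0:ℝ)..L, PG ρ ρ₁ ρ₃ μ γ u φ w x t := by
    have hfac := mul_nonneg (by linarith : (0:ℝ) ≤ N - C₃ - 1) hEt
    nlinarith [hPt]
  have hee : Real.exp (sig*t) * Real.exp (-sig*t) = 1 := by
    rw [← Real.exp_add, show sig*t + -sig*t = 0 by ring, Real.exp_zero]
  have h3 := mul_le_mul_of_nonneg_right hg (Real.exp_pos (-sig*t)).le
  have h4 : (N * energy L ρ α lm ρ₁ K b ρ₃ δ u φ ψ w 0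
      + ∫ x in (0:ℝ)..L, PG ρ ρ₁ ρ₃ μ γ u φ w x 0) * Real.exp (-sig*t)
      ≤ ((N + C₃) * energy L ρ α lm ρ₁ K b ρ₃ δ u φ ψ w 0) * Real.exp (-sig*t) := by
    apply mul_le_mul_of_nonneg_right _ (Real.exp_pos (-sig*t)).le
    nlinarith [hP0]
  have h5 : (N * energy L ρ α lm ρ₁ K b ρ₃ δ u φ ψ w t
      + ∫ x in (0:ℝ)..L, PG ρ ρ₁ ρ₃ μ γ u φ w x t)
      = ((N * energy L ρ α lm ρ₁ K b ρ₃ δ u φ ψ w t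
      + ∫ x in (0:ℝ)..L, PG ρ ρ₁ ρ₃ μ γ u φ w x t) * Real.exp (sig*t)) * Real.exp (-sig*t) := by
    rw [mul_assoc, hee, mul_one]
  linarith [h1, h3, h4, h5]
end
end
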